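/- arXiv:1808.10474 — 12 statements merged into one kernel-verified Lean document; each statement's English description precedes it below -/
import Mathlib

section
/- Let f satisfy the Polyak–Łojasiewicz inequality with constant μ_f > 0 and have unique minimizer x* with f* = f(x*). Let x : ℝ → ℝⁿ be any trajectory of the rescaled gradient flow ẋ = −∇f(x)/‖∇f(x)‖^{1/2} (right-hand side taken to be 0 when ∇f(x) = 0). Then f(x(t)) = f* for every t ≥ 8·(½(f(x(0)) − f*)²)^{1/8}/(2μ_f)^{3/4}; in particular the trajectory reaches the minimum value in finite time. -/
open scoped RealInnerProductSpace Classical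

open Set in
/-- Comparison lemma: if `h ≥ 0` satisfies `h' ≤ -c h^{3/4}` on `[0, ∞)` with `c > 0`,
then `h` vanishes after time `4 h(0)^{1/4} / c`. -/
lemma comparison_finite_time_aux {h h' : ℝ → ℝ} {c : ℝ} (hc : 0 < c)
    (hderiv : ∀ t, 0 ≤ t → HasDerivAt h (h' t) t)
    (hnn : ∀ t, 0 ≤ t → 0 ≤ h t)
    (hineq : ∀ t, 0 ≤ t → h' t ≤ -c * (h t) ^ ((3:ℝ)/4)) :
    ∀ t, 4 * (h 0) ^ ((1:ℝ)/4) / c ≤ t → h t = 0 := by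
  intro t hT
  have h00 : 0 ≤ h 0 := hnn 0 le_rfl
  have hT0 : (0:ℝ) ≤ 4 * (h 0) ^ ((1:ℝ)/4) / c := by positivity
  have ht0 : (0:ℝ) ≤ t := le_trans hT0 hT
  by_contra hne
  have hpos : 0 < h t := lt_of_le_of_ne (hnn t ht0) (Ne.symm hne)
  -- h is antitone on [0, t]
  have hanti : AntitoneOn h (Icc 0 t) := by
    apply antitoneOn_of_deriv_nonpos (convex_Icc 0 t)
    · exact fun s hs => ((hderiv s hs.1).continuousAt).continuousWithinAt
    · intro s hs
      rw [interior_Icc] at hs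
      exact (hderiv s hs.1.le).differentiableAt.differentiableWithinAt
    · intro s hs
      rw [interior_Icc] at hs
      rw [(hderiv s hs.1.le).deriv]
      have := hineq s hs.1.le
      have h34 : (0:ℝ) ≤ (h s) ^ ((3:ℝ)/4) := Real.rpow_nonneg (hnn s hs.1.le) _
      nlinarith
  have hposall : ∀ s ∈ Icc (0:ℝ) t, 0 < h s := by
    intro s hs
    exact lt_of_lt_of_le hpos (hanti hs (right_mem_Icc.mpr ht0) hs.2)
  -- g s = (h s)^{1/4} + (c/4) s is antitone on [0,t]
  set g : ℝ → ℝ := fun s => (h s) ^ ((1:ℝ)/4) + c/4 * s with hg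
  have hgderiv : ∀ s ∈ Icc (0:ℝ) t,
      HasDerivAt g (h' s * ((1:ℝ)/4) * (h s) ^ ((1:ℝ)/4 - 1) + c/4) s := by
    intro s hs
    have := ((hderiv s hs.1).rpow_const (p := (1:ℝ)/4) (Or.inl (hposall s hs).ne')).add
      ((hasDerivAt_id s).const_mul (c/4))
    simpa [hg, Pi.add_def] using this
  have hganti : AntitoneOn g (Icc 0 t) := by
    apply antitoneOn_of_deriv_nonpos (convex_Icc 0 t)
    · exact fun s hs => ((hgderiv s hs).continuousAt).continuousWithinAt
    · intro s hs
      rw [interior_Icc] at hs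
      exact (hgderiv s (Ioo_subset_Icc_self hs)).differentiableAt.differentiableWithinAt
    · intro s hs
      rw [interior_Icc] at hs
      have hsI : s ∈ Icc (0:ℝ) t := Ioo_subset_Icc_self hs
      rw [(hgderiv s hsI).deriv]
      have hps : 0 < h s := hposall s hsI
      have key : h' s * ((1:ℝ)/4) * (h s) ^ ((1:ℝ)/4 - 1) ≤ -c/4 := by
        have h1 : (h s) ^ ((1:ℝ)/4 - 1) * h' s ≤ (h s) ^ ((1:ℝ)/4 - 1) * (-c * (h s) ^ ((3:ℝ)/4)) :=
          mul_le_mul_of_nonneg_left (hineq s hsI.1) (Real.rpow_nonneg hps.le _)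
        have h2 : (h s) ^ ((1:ℝ)/4 - 1) * (h s) ^ ((3:ℝ)/4) = 1 := by
          rw [← Real.rpow_add hps]
          norm_num
        calc h' s * ((1:ℝ)/4) * (h s) ^ ((1:ℝ)/4 - 1)
            = ((h s) ^ ((1:ℝ)/4 - 1) * h' s) / 4 := by ring
          _ ≤ ((h s) ^ ((1:ℝ)/4 - 1) * (-c * (h s) ^ ((3:ℝ)/4))) / 4 := by linarith
          _ = -c * ((h s) ^ ((1:ℝ)/4 - 1) * (h s) ^ ((3:ℝ)/4)) / 4 := by ring
          _ = -c/4 := by rw [h2]; ring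
      linarith
  have hg0 : g t ≤ g 0 := hganti (left_mem_Icc.mpr ht0) (right_mem_Icc.mpr ht0) ht0
  have hkey : (h t) ^ ((1:ℝ)/4) + c/4 * t ≤ (h 0) ^ ((1:ℝ)/4) := by
    simpa [hg] using hg0
  have hct : (h 0) ^ ((1:ℝ)/4) ≤ c/4 * t := by
    rw [div_le_iff₀ hc] at hT
    nlinarith
  have : (h t) ^ ((1:ℝ)/4) ≤ 0 := by linarith
  exact absurd this (not_le.mpr (Real.rpow_pos_of_pos hpos _))

/-- Rescaled gradient flow `ẋ = −∇f(x)/‖∇f(x)‖^{1/2}` reaches the minimum value of a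
gradient-dominated (PL) function in finite time `8 (½(f(x(0))−f*)²)^{1/8} / (2μ_f)^{3/4}`. -/
theorem rescaled_gradient_flow_finite_time_PL
    {n : ℕ} (f : EuclideanSpace ℝ (Fin n) → ℝ) (hf : ContDiff ℝ 1 f)
    (μf : ℝ) (hμf : 0 < μf)
    (xstar : EuclideanSpace ℝ (Fin n))
    (hmin : ∀ y, f xstar ≤ f y)
    (huniq : ∀ y, f y = f xstar → y = xstar)
    (hPL : ∀ y : EuclideanSpace ℝ (Fin n),
      μf * (f y - f xstar) ≤ (1 / 2) * ‖gradient f y‖ ^ 2)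
    (x : ℝ → EuclideanSpace ℝ (Fin n))
    (hx : ∀ t : ℝ, 0 ≤ t → HasDerivAt x
      (if gradient f (x t) = 0 then 0
       else -(‖gradient f (x t)‖ ^ ((1 : ℝ) / 2))⁻¹ • gradient f (x t)) t) :
    ∀ t : ℝ,
      8 * ((1 / 2) * (f (x 0) - f xstar) ^ 2) ^ ((1 : ℝ) / 8) / (2 * μf) ^ ((3 : ℝ) / 4) ≤ t →
      f (x t) = f xstar := by
  set h : ℝ → ℝ := fun t => f (x t) - f xstar with hh
  set h' : ℝ → ℝ := fun t => -(‖gradient f (x t)‖ ^ ((3:ℝ)/2)) with hh'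
  set c : ℝ := (2 * μf) ^ ((3:ℝ)/4) with hcdef
  have hμ2 : (0:ℝ) < 2 * μf := by linarith
  have hc : 0 < c := Real.rpow_pos_of_pos hμ2 _
  have hnn : ∀ t, 0 ≤ t → 0 ≤ h t := fun t _ => sub_nonneg.mpr (hmin (x t))
  have hderiv : ∀ t, 0 ≤ t → HasDerivAt h (h' t) t := by
    intro t ht
    set g := gradient f (x t) with hgdef
    have hgrad : HasGradientAt f g (x t) :=
      ((hf.differentiable one_ne_zero) (x t)).hasGradientAt
    have hfd := hgrad.hasFDerivAt.comp_hasDerivAt t (hx t ht)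
    have hval : (InnerProductSpace.toDual ℝ _ g)
        (if g = 0 then 0 else -(‖g‖ ^ ((1:ℝ)/2))⁻¹ • g) = h' t := by
      by_cases hg0 : g = 0
      · simp [hg0, hh', ← hgdef, Real.zero_rpow (by norm_num : (3:ℝ)/2 ≠ 0)]
      · have hgp : 0 < ‖g‖ := norm_pos_iff.mpr hg0
        rw [if_neg hg0, InnerProductSpace.toDual_apply_apply, inner_smul_right,
          real_inner_self_eq_norm_sq]
        have : (‖g‖ ^ ((1:ℝ)/2))⁻¹ * ‖g‖ ^ 2 = ‖g‖ ^ ((3:ℝ)/2) := by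
          rw [← Real.rpow_neg_one, ← Real.rpow_natCast ‖g‖ 2,
            ← Real.rpow_mul hgp.le, ← Real.rpow_add hgp]
          norm_num
        simp only [hh', ← hgdef]
        rw [← this]
        ring
    rw [hval] at hfd
    exact hfd.sub_const (f xstar)
  have hineq : ∀ t, 0 ≤ t → h' t ≤ -c * (h t) ^ ((3:ℝ)/4) := by
    intro t ht
    have hPL' : 2 * μf * h t ≤ ‖gradient f (x t)‖ ^ 2 := by
      have := hPL (x t); simp only [hh]; nlinarith
    have hlhs : 0 ≤ 2 * μf * h t := by
      have := hnn t ht; positivity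
    have hr : (2 * μf * h t) ^ ((3:ℝ)/4) ≤ (‖gradient f (x t)‖ ^ 2) ^ ((3:ℝ)/4) :=
      Real.rpow_le_rpow hlhs hPL' (by norm_num)
    have h1 : (2 * μf * h t) ^ ((3:ℝ)/4) = c * (h t) ^ ((3:ℝ)/4) := by
      rw [Real.mul_rpow hμ2.le (hnn t ht)]
    have h2 : (‖gradient f (x t)‖ ^ 2) ^ ((3:ℝ)/4) = ‖gradient f (x t)‖ ^ ((3:ℝ)/2) := by
      rw [← Real.rpow_natCast ‖gradient f (x t)‖ 2, ← Real.rpow_mul (norm_nonneg _)]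
      norm_num
    rw [h1, h2] at hr
    simp only [hh']
    linarith
  intro t hT
  have h00 : 0 ≤ h 0 := hnn 0 le_rfl
  -- arithmetic: 4 (h 0)^{1/4} / c ≤ stated bound
  have harith : 4 * (h 0) ^ ((1:ℝ)/4) ≤ 8 * ((1/2) * (h 0) ^ 2) ^ ((1:ℝ)/8) := by
    have ha1 : ((1/2 : ℝ) * (h 0) ^ 2) ^ ((1:ℝ)/8) = (1/2:ℝ) ^ ((1:ℝ)/8) * (h 0) ^ ((1:ℝ)/4) := by
      rw [Real.mul_rpow (by norm_num) (by positivity), ← Real.rpow_natCast (h 0) 2,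
        ← Real.rpow_mul h00]
      norm_num
    rw [ha1]
    have ha2 : (1/2:ℝ) ≤ (1/2:ℝ) ^ ((1:ℝ)/8) := by
      have := Real.rpow_le_rpow_of_exponent_ge (x := (1/2:ℝ)) (by norm_num) (by norm_num)
        (by norm_num : (1:ℝ)/8 ≤ 1)
      simpa using this
    have ha3 : 0 ≤ (h 0) ^ ((1:ℝ)/4) := Real.rpow_nonneg h00 _
    nlinarith
  have hT' : 4 * (h 0) ^ ((1:ℝ)/4) / c ≤ t := by
    refine le_trans ?_ hT
    gcongr
  have := comparison_finite_time_aux hc hderiv hnn hineq t hT'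
  simp only [hh] at this
  linarith
end

section
/- Fix p > 2 and set β₁ = p/(2(p−1)) ∈ (1/2, 1). Let f satisfy the strong-convexity bound ⟪v, ∇²f(x) v⟫ ≥ k‖v‖² (k > 0) with unique critical point x*. Let x : ℝ → ℝⁿ be any trajectory of the modified gradient flow ẋ = −∇f(x)/‖∇f(x)‖^{(p−2)/(p−1)} (right-hand side taken to be 0 when ∇f(x) = 0). Then x(t) = x* for every t ≥ ‖∇f(x(0))‖^{2−2β₁}/(2k(1−β₁)). -/
open scoped RealInnerProductSpace Classical

lemma grad_contDiff' {n : ℕ} (f : EuclideanSpace ℝ (Fin n) → ℝ) (hf : ContDiff ℝ 2 f) :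
    ContDiff ℝ 1 (gradient f) := by
  have h1 : ContDiff ℝ 1 (fderiv ℝ f) := hf.fderiv_right (by norm_num)
  have h2 : gradient f = fun x => (InnerProductSpace.toDual ℝ _).symm (fderiv ℝ f x) := rfl
  rw [h2]
  exact (InnerProductSpace.toDual ℝ _).symm.contDiff.comp h1

lemma crit_eq' {n : ℕ} (f : EuclideanSpace ℝ (Fin n) → ℝ) (hf : ContDiff ℝ 2 f)
    (k : ℝ) (hk : 0 < k)
    (hconv : ∀ x v : EuclideanSpace ℝ (Fin n),
      k * ‖v‖ ^ 2 ≤ ⟪v, fderiv ℝ (gradient f) x v⟫)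
    (xstar y : EuclideanSpace ℝ (Fin n)) (hxstar : gradient f xstar = 0)
    (hy : gradient f y = 0) : y = xstar := by
  have hgd : Differentiable ℝ (gradient f) := (grad_contDiff' f hf).differentiable one_ne_zero
  set d := y - xstar with hd
  set φ : ℝ → ℝ := fun s => ⟪gradient f (xstar + s • d), d⟫ - k * ‖d‖ ^ 2 * s with hφ
  have hder : ∀ s : ℝ, HasDerivAt φ
      (⟪(fderiv ℝ (gradient f) (xstar + s • d)) d, d⟫ - k * ‖d‖ ^ 2) s := by
    intro s
    have hc : HasDerivAt (fun s : ℝ => xstar + s • d) d s := by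
      simpa using ((hasDerivAt_id s).smul_const d).const_add xstar
    have h1 : HasDerivAt (fun s : ℝ => gradient f (xstar + s • d))
        ((fderiv ℝ (gradient f) (xstar + s • d)) d) s :=
      (hgd _).hasFDerivAt.comp_hasDerivAt s hc
    have h2 := h1.inner ℝ (hasDerivAt_const s d)
    have h3 : HasDerivAt (fun s : ℝ => k * ‖d‖ ^ 2 * s) (k * ‖d‖ ^ 2) s := by
      simpa using (hasDerivAt_id s).const_mul (k * ‖d‖ ^ 2)
    exact (h2.sub h3).congr_deriv (by simp)
  have hmono : Monotone φ := by
    apply monotone_of_deriv_nonneg (fun s => (hder s).differentiableAt)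
    intro s
    rw [(hder s).deriv]
    have := hconv (xstar + s • d) d
    rw [real_inner_comm] at this
    linarith
  have h01 := hmono (by norm_num : (0:ℝ) ≤ 1)
  have e0 : φ 0 = 0 := by simp [hφ, hxstar, -inner_gradient_left]
  have e1 : φ 1 = -(k * ‖d‖ ^ 2) := by
    have h5 : xstar + d = y := by simp [hd]
    simp [hφ, h5, hy, -inner_gradient_left]
  rw [e0, e1] at h01
  have hdz : ‖d‖ ^ 2 ≤ 0 := by nlinarith
  have : d = 0 := by
    have := sq_nonneg ‖d‖
    have hn : ‖d‖ = 0 := by nlinarith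
    simpa using hn
  have := sub_eq_zero.mp (hd ▸ this)
  exact this

/-- Modified gradient flow `ẋ = −∇f(x)/‖∇f(x)‖^{(p−2)/(p−1)}`, `p > 2`, reaches the unique
critical point of a strongly convex `f` in finite time `‖∇f(x(0))‖^{2−2β₁}/(2k(1−β₁))`,
where `β₁ = p/(2(p−1))`. -/
theorem modified_gradient_flow_finite_time_strong_convex
    {n : ℕ} (p : ℝ) (hp : 2 < p) (β₁ : ℝ) (hβ₁ : β₁ = p / (2 * (p - 1)))
    (f : EuclideanSpace ℝ (Fin n) → ℝ) (hf : ContDiff ℝ 2 f)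
    (k : ℝ) (hk : 0 < k)
    (hconv : ∀ x v : EuclideanSpace ℝ (Fin n),
      k * ‖v‖ ^ 2 ≤ ⟪v, fderiv ℝ (gradient f) x v⟫)
    (xstar : EuclideanSpace ℝ (Fin n)) (hxstar : gradient f xstar = 0)
    (x : ℝ → EuclideanSpace ℝ (Fin n))
    (hx : ∀ t : ℝ, 0 ≤ t → HasDerivAt x
      (if gradient f (x t) = 0 then 0
       else -(‖gradient f (x t)‖ ^ ((p - 2) / (p - 1)))⁻¹ • gradient f (x t)) t) :
    ∀ t : ℝ, ‖gradient f (x 0)‖ ^ (2 - 2 * β₁) / (2 * k * (1 - β₁)) ≤ t → x t = xstar := by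
  intro t ht
  have hp1 : (0:ℝ) < p - 1 := by linarith
  set α : ℝ := (p - 2) / (p - 1) with hα
  have hα0 : 0 < α := div_pos (by linarith) hp1
  have hα1 : α < 1 := by rw [hα, div_lt_one hp1]; linarith
  have hβα : 2 - 2 * β₁ = α := by
    rw [hβ₁, hα]; field_simp; ring
  have h2k : 2 * k * (1 - β₁) = k * α := by
    rw [hβ₁, hα]; field_simp; ring
  rw [hβα, h2k] at ht
  have hgd : Differentiable ℝ (gradient f) := (grad_contDiff' f hf).differentiable one_ne_zero
  set g := gradient f with hg
  set γ : ℝ → EuclideanSpace ℝ (Fin n) := fun τ => g (x τ) with hγdef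
  set F : ℝ → EuclideanSpace ℝ (Fin n) :=
    fun τ => if γ τ = 0 then 0 else -(‖γ τ‖ ^ α)⁻¹ • γ τ with hF
  have hγ' : ∀ τ : ℝ, 0 ≤ τ → HasDerivAt γ ((fderiv ℝ g (x τ)) (F τ)) τ := by
    intro τ hτ
    exact (hgd (x τ)).hasFDerivAt.comp_hasDerivAt τ (hx τ hτ)
  set V : ℝ → ℝ := fun τ => ‖γ τ‖ ^ 2 with hVdef
  have Veq : ∀ s : ℝ, V s = ‖γ s‖ ^ ((2:ℝ)) := by
    intro s
    rw [Real.rpow_two]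
  have hV : ∀ τ : ℝ, 0 ≤ τ →
      HasDerivAt V (2 * ⟪γ τ, (fderiv ℝ g (x τ)) (F τ)⟫) τ := by
    intro τ hτ
    have h1 := (hγ' τ hτ).inner ℝ (hγ' τ hτ)
    have h2 : V = fun τ => ⟪γ τ, γ τ⟫ := by
      funext s; rw [real_inner_self_eq_norm_sq]
    rw [h2]
    exact h1.congr_deriv (by rw [real_inner_comm]; ring)
  have hVle : ∀ τ : ℝ, 2 * ⟪γ τ, (fderiv ℝ g (x τ)) (F τ)⟫ ≤
      -(2 * k) * ‖γ τ‖ ^ (2 - α) := by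
    intro τ
    by_cases hz : γ τ = 0
    · have hF0 : F τ = 0 := by rw [hF]; simp [hz]
      rw [hF0, map_zero, inner_zero_right, hz, norm_zero,
        Real.zero_rpow (by linarith : (2:ℝ) - α ≠ 0)]
      norm_num
    · have hN : 0 < ‖γ τ‖ := norm_pos_iff.mpr hz
      have hc : (0:ℝ) < ‖γ τ‖ ^ α := Real.rpow_pos_of_pos hN α
      have hFv : F τ = (-(‖γ τ‖ ^ α)⁻¹) • γ τ := by simp [hF, hz]
      rw [hFv, map_smul, real_inner_smul_right]
      have hb := hconv (x τ) (γ τ)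
      have key : ‖γ τ‖ ^ 2 = ‖γ τ‖ ^ (2 - α) * ‖γ τ‖ ^ α := by
        rw [← Real.rpow_add hN, ← Real.rpow_natCast ‖γ τ‖ 2]
        norm_num
      calc 2 * (-(‖γ τ‖ ^ α)⁻¹ * ⟪γ τ, (fderiv ℝ g (x τ)) (γ τ)⟫)
          ≤ 2 * (-(‖γ τ‖ ^ α)⁻¹ * (k * ‖γ τ‖ ^ 2)) := by
            have h4 : (0:ℝ) < (‖γ τ‖ ^ α)⁻¹ := by positivity
            nlinarith [hb]
        _ = -(2 * k) * ‖γ τ‖ ^ (2 - α) := by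
            rw [key]; field_simp
  -- V is antitone on [0, ∞)
  have hVanti : AntitoneOn V (Set.Ici (0:ℝ)) := by
    apply antitoneOn_of_deriv_nonpos (convex_Ici 0)
    · intro s hs
      exact (hV s hs).continuousAt.continuousWithinAt
    · intro s hs
      rw [interior_Ici] at hs
      exact (hV s (le_of_lt hs)).differentiableAt.differentiableWithinAt
    · intro s hs
      rw [interior_Ici] at hs
      rw [(hV s (le_of_lt hs)).deriv]
      have h5 := hVle s
      have h6 : (0:ℝ) ≤ ‖γ s‖ ^ (2 - α) := Real.rpow_nonneg (norm_nonneg _) _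
      nlinarith
  set T : ℝ := ‖γ 0‖ ^ α / (k * α) with hT
  have hkα : (0:ℝ) < k * α := by positivity
  have hT0 : 0 ≤ T := div_nonneg (Real.rpow_nonneg (norm_nonneg _) _) (le_of_lt hkα)
  have hzero : ∃ s ∈ Set.Icc (0:ℝ) T, γ s = 0 := by
    by_cases h0 : γ 0 = 0
    · exact ⟨0, ⟨le_rfl, hT0⟩, h0⟩
    by_contra hcon
    push_neg at hcon
    have hNpos : ∀ s ∈ Set.Icc (0:ℝ) T, 0 < ‖γ s‖ := fun s hs =>
      norm_pos_iff.mpr (hcon s hs)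
    set h : ℝ → ℝ := fun s => (V s) ^ (α / 2) + k * α * s with hh
    have hW : ∀ s ∈ Set.Icc (0:ℝ) T,
        HasDerivAt h ((α/2) * (V s) ^ (α/2 - 1) *
          (2 * ⟪γ s, (fderiv ℝ g (x s)) (F s)⟫) + k * α) s := by
      intro s hs
      have hVs : V s ≠ 0 := by
        have := hNpos s hs; positivity
      have h1 : HasDerivAt (fun y : ℝ => y ^ (α/2))
          ((α/2) * (V s) ^ (α/2 - 1)) (V s) :=
        Real.hasDerivAt_rpow_const (Or.inl hVs)
      have h2 := h1.comp s (hV s hs.1)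
      have h3 : HasDerivAt (fun s : ℝ => k * α * s) (k * α) s := by
        simpa using (hasDerivAt_id s).const_mul (k * α)
      exact h2.add h3
    have hWneg : ∀ s ∈ Set.Icc (0:ℝ) T,
        (α/2) * (V s) ^ (α/2 - 1) *
          (2 * ⟪γ s, (fderiv ℝ g (x s)) (F s)⟫) + k * α ≤ 0 := by
      intro s hs
      have hN := hNpos s hs
      have hVpos : 0 < V s := by positivity
      have hmul : (0:ℝ) < (α/2) * (V s) ^ (α/2 - 1) := by positivity
      have h5 := hVle s
      have h7 : (α/2) * (V s) ^ (α/2 - 1) *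
          (2 * ⟪γ s, (fderiv ℝ g (x s)) (F s)⟫) ≤
          (α/2) * (V s) ^ (α/2 - 1) * (-(2 * k) * ‖γ s‖ ^ (2 - α)) :=
        mul_le_mul_of_nonneg_left h5 (le_of_lt hmul)
      have h8 : (α/2) * (V s) ^ (α/2 - 1) * (-(2 * k) * ‖γ s‖ ^ (2 - α)) = -(k * α) := by
        rw [Veq s, ← Real.rpow_mul (norm_nonneg _)]
        have e2 : ‖γ s‖ ^ ((2:ℝ) * (α/2 - 1)) * ‖γ s‖ ^ (2 - α) = 1 := by
          rw [← Real.rpow_add hN, show (2:ℝ) * (α/2 - 1) + (2 - α) = 0 by ring,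
            Real.rpow_zero]
        linear_combination (-(k * α)) * e2
      rw [h8] at h7
      linarith
    have hanti : AntitoneOn h (Set.Icc 0 T) := by
      apply antitoneOn_of_deriv_nonpos (convex_Icc 0 T)
      · intro s hs
        exact (hW s hs).continuousAt.continuousWithinAt
      · intro s hs
        rw [interior_Icc] at hs
        exact (hW s (Set.mem_Icc_of_Ioo hs)).differentiableAt.differentiableWithinAt
      · intro s hs
        rw [interior_Icc] at hs
        rw [(hW s (Set.mem_Icc_of_Ioo hs)).deriv]
        exact hWneg s (Set.mem_Icc_of_Ioo hs)
    have hTmem : T ∈ Set.Icc (0:ℝ) T := ⟨hT0, le_rfl⟩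
    have h0mem : (0:ℝ) ∈ Set.Icc (0:ℝ) T := ⟨le_rfl, hT0⟩
    have := hanti h0mem hTmem hT0
    -- h T ≤ h 0 : (V T)^(α/2) + kα T ≤ (V 0)^(α/2)
    have eV : ∀ s, (V s) ^ (α/2) = ‖γ s‖ ^ α := by
      intro s
      rw [Veq s, ← Real.rpow_mul (norm_nonneg _), show (2:ℝ) * (α/2) = α by ring]
    have hkT : k * α * T = ‖γ 0‖ ^ α := by
      rw [hT]; field_simp
    rw [hh] at this
    simp only [eV] at this
    rw [hkT] at this
    have hTpos : 0 < ‖γ T‖ ^ α :=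
      Real.rpow_pos_of_pos (hNpos T hTmem) α
    linarith
  obtain ⟨s, hs, hγs⟩ := hzero
  have hst : s ≤ t := le_trans hs.2 (le_trans ht (le_refl t))
  have hVt : V t ≤ V s := hVanti hs.1 (le_trans hs.1 hst) hst
  have hVs0 : V s = 0 := by
    rw [Veq s, hγs, norm_zero, Real.zero_rpow (by norm_num : (2:ℝ) ≠ 0)]
  have hVtnn : (0:ℝ) ≤ V t := by
    rw [Veq t]
    exact Real.rpow_nonneg (norm_nonneg _) _
  have hVt0 : V t = 0 := le_antisymm (by rw [hVs0] at hVt; exact hVt) hVtnn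
  have hγt : γ t = 0 := by
    have h9 : ‖γ t‖ ^ (2:ℕ) = 0 := by
      have h9' := hVt0
      rw [Veq t, Real.rpow_two] at h9'
      exact h9'
    exact norm_eq_zero.mp (pow_eq_zero_iff (by norm_num) |>.mp h9)
  exact crit_eq' f hf k hk hconv xstar (x t) hxstar hγt
end

section
/- Fix p > 2 and set β₁ = p/(2(p−1)), β₂ = (3p−2)/(4(p−1)) ∈ (3/4, 1), and k₂ = (2μ_f)^{β₁}·2^{β₂}. Let f satisfy the Polyak–Łojasiewicz inequality with constant μ_f > 0 and have unique minimizer x* with f* = f(x*). Let x : ℝ → ℝⁿ be any trajectory of the modified gradient flow ẋ = −∇f(x)/‖∇f(x)‖^{(p−2)/(p−1)} (right-hand side taken to be 0 when ∇f(x) = 0). Then f(x(t)) = f* for every t ≥ (f(x(0)) − f*)^{2−2β₂}/(2^{1−β₂} k₂ (1−β₂)). -/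
open scoped RealInnerProductSpace Classical

/-- Modified gradient flow `ẋ = −∇f(x)/‖∇f(x)‖^{(p−2)/(p−1)}`, `p > 2`, reaches the minimum
value of a gradient-dominated (PL) function in finite time
`(f(x(0))−f*)^{2−2β₂}/(2^{1−β₂} k₂ (1−β₂))`, where `β₁ = p/(2(p−1))`,
`β₂ = (3p−2)/(4(p−1))` and `k₂ = (2μ_f)^{β₁} 2^{β₂}`. -/
theorem modified_gradient_flow_finite_time_PL
    {n : ℕ} (p : ℝ) (hp : 2 < p)
    (β₁ β₂ k₂ : ℝ) (hβ₁ : β₁ = p / (2 * (p - 1))) (hβ₂ : β₂ = (3 * p - 2) / (4 * (p - 1)))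
    (μf : ℝ) (hμf : 0 < μf) (hk₂ : k₂ = (2 * μf) ^ β₁ * 2 ^ β₂)
    (f : EuclideanSpace ℝ (Fin n) → ℝ) (hf : ContDiff ℝ 1 f)
    (xstar : EuclideanSpace ℝ (Fin n))
    (hmin : ∀ y, f xstar ≤ f y)
    (huniq : ∀ y, f y = f xstar → y = xstar)
    (hPL : ∀ y : EuclideanSpace ℝ (Fin n),
      μf * (f y - f xstar) ≤ (1 / 2) * ‖gradient f y‖ ^ 2)
    (x : ℝ → EuclideanSpace ℝ (Fin n))
    (hx : ∀ t : ℝ, 0 ≤ t → HasDerivAt x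
      (if gradient f (x t) = 0 then 0
       else -(‖gradient f (x t)‖ ^ ((p - 2) / (p - 1)))⁻¹ • gradient f (x t)) t) :
    ∀ t : ℝ,
      (f (x 0) - f xstar) ^ (2 - 2 * β₂) / (2 ^ (1 - β₂) * k₂ * (1 - β₂)) ≤ t →
      f (x t) = f xstar := by
  have hp1 : (0:ℝ) < p - 1 := by linarith
  set c : ℝ := (2 * μf) ^ β₁ with hc
  set q : ℝ := 1 - β₁ with hqdef
  have hβ₁pos : 0 < β₁ := by
    rw [hβ₁]; positivity
  have hβ₁lt1 : β₁ < 1 := by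
    rw [hβ₁, div_lt_one (by linarith)]; linarith
  have hqpos : 0 < q := by rw [hqdef]; linarith
  have hcpos : 0 < c := Real.rpow_pos_of_pos (by linarith) _
  have hq2 : 2 - 2 * β₂ = q := by
    rw [hqdef, hβ₁, hβ₂]; field_simp; ring
  have hden : 2 ^ (1 - β₂) * k₂ * (1 - β₂) = c * q := by
    have h2 : (2:ℝ) ^ (1 - β₂) * 2 ^ β₂ = 2 := by
      rw [← Real.rpow_add two_pos]; norm_num
    have hq' : 2 * (1 - β₂) = q := by rw [← hq2]; ring
    rw [hk₂, ← hq']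
    calc 2 ^ (1 - β₂) * (c * 2 ^ β₂) * (1 - β₂)
        = ((2:ℝ) ^ (1 - β₂) * 2 ^ β₂) * c * (1 - β₂) := by ring
      _ = c * (2 * (1 - β₂)) := by rw [h2]; ring
  -- the Lyapunov function and its derivative
  set V : ℝ → ℝ := fun s => f (x s) - f xstar with hV
  set D : ℝ → ℝ := fun s =>
    if gradient f (x s) = 0 then 0 else -‖gradient f (x s)‖ ^ (p / (p - 1)) with hD
  have hVnonneg : ∀ s, 0 ≤ V s := fun s => sub_nonneg.2 (hmin _)
  clear_value V D
  have hasDerivV : ∀ s : ℝ, 0 ≤ s → HasDerivAt V (D s) s := by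
    intro s hs
    have hdx := hx s hs
    have hgrad : HasGradientAt f (gradient f (x s)) (x s) :=
      (hf.differentiable one_ne_zero (x s)).hasGradientAt
    have hcomp := hgrad.hasFDerivAt.comp_hasDerivAt s hdx
    have heq : (InnerProductSpace.toDual ℝ _ (gradient f (x s)))
        (if gradient f (x s) = 0 then 0
         else -(‖gradient f (x s)‖ ^ ((p - 2) / (p - 1)))⁻¹ • gradient f (x s)) = D s := by
      by_cases hg : gradient f (x s) = 0
      · simp [hD, hg]
      · have hgn : 0 < ‖gradient f (x s)‖ := norm_pos_iff.2 hg
        simp only [hD, if_neg hg]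
        rw [InnerProductSpace.toDual_apply_apply, inner_smul_right, real_inner_self_eq_norm_sq]
        have h2r : ‖gradient f (x s)‖ ^ (2:ℕ) = ‖gradient f (x s)‖ ^ ((2:ℝ)) := by
          rw [← Real.rpow_natCast _ 2]; norm_num
        rw [h2r, ← Real.rpow_neg hgn.le, neg_mul, neg_inj, ← Real.rpow_add hgn]
        congr 1
        field_simp; ring
    have hDeriv : HasDerivAt (f ∘ x) (D s) s := heq ▸ hcomp
    rw [hV]
    exact hDeriv.sub_const (f xstar)
  have hDnonpos : ∀ s, D s ≤ 0 := by
    intro s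
    simp only [hD]
    split
    · exact le_rfl
    · exact neg_nonpos.2 (Real.rpow_nonneg (norm_nonneg _) _)
  have hDle : ∀ s, D s ≤ -(c * V s ^ β₁) := by
    intro s
    by_cases hg : gradient f (x s) = 0
    · have h1 : μf * V s ≤ 0 := by simpa [hV, hg] using hPL (x s)
      have hV0 : V s = 0 := le_antisymm (by nlinarith [hVnonneg s]) (hVnonneg s)
      simp [hD, hg, hV0, Real.zero_rpow hβ₁pos.ne']
    · have hgn : 0 < ‖gradient f (x s)‖ := norm_pos_iff.2 hg
      simp only [hD, if_neg hg]
      have h1 : 2 * μf * V s ≤ ‖gradient f (x s)‖ ^ (2:ℕ) := by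
        have h0 : μf * V s ≤ (1 / 2) * ‖gradient f (x s)‖ ^ 2 := by
          have := hPL (x s); rw [hV]; simpa using this
        linarith
      have h2 : (2 * μf * V s) ^ β₁ ≤ (‖gradient f (x s)‖ ^ (2:ℕ)) ^ β₁ :=
        Real.rpow_le_rpow (mul_nonneg (by positivity) (hVnonneg s)) h1 hβ₁pos.le
      have h3 : (2 * μf * V s) ^ β₁ = c * V s ^ β₁ := by
        rw [Real.mul_rpow (by positivity) (hVnonneg s), hc]
      have h4 : (‖gradient f (x s)‖ ^ (2:ℕ)) ^ β₁ = ‖gradient f (x s)‖ ^ (p / (p - 1)) := by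
        rw [← Real.rpow_natCast ‖gradient f (x s)‖ 2, ← Real.rpow_mul hgn.le]
        congr 1
        rw [hβ₁]; push_cast; field_simp
      rw [h3, h4] at h2
      linarith
  -- main argument
  intro t ht
  rw [hq2, hden] at ht
  have ht0 : 0 ≤ t := by
    refine le_trans ?_ ht
    have h0 : 0 ≤ f (x 0) - f xstar := sub_nonneg.2 (hmin _)
    positivity
  have hVanti : AntitoneOn V (Set.Icc 0 t) := by
    apply antitoneOn_of_deriv_nonpos (convex_Icc 0 t)
    · exact fun s hs => ((hasDerivV s hs.1).continuousAt).continuousWithinAt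
    · intro s hs
      rw [interior_Icc] at hs
      exact (hasDerivV s hs.1.le).differentiableAt.differentiableWithinAt
    · intro s hs
      rw [interior_Icc] at hs
      rw [(hasDerivV s hs.1.le).deriv]
      exact hDnonpos s
  by_contra hne
  have hVt : 0 < V t := by
    rcases (hVnonneg t).lt_or_eq with h | h
    · exact h
    · simp only [hV] at h
      exact absurd (sub_eq_zero.mp h.symm) hne
  have hVpos : ∀ s ∈ Set.Icc 0 t, 0 < V s := fun s hs =>
    lt_of_lt_of_le hVt (hVanti hs (Set.right_mem_Icc.2 ht0) hs.2)
  have hasDerivW : ∀ s ∈ Set.Icc 0 t,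
      HasDerivAt (fun u => V u ^ q + c * q * u) (q * V s ^ (q - 1) * D s + c * q) s := by
    intro s hs
    have h1 : HasDerivAt (fun u => V u ^ q) (q * V s ^ (q - 1) * D s) s := by
      have hr := Real.hasDerivAt_rpow_const (x := V s) (p := q) (Or.inl (hVpos s hs).ne')
      have hcomp := hr.comp s (hasDerivV s hs.1)
      exact hcomp
    have h2 : HasDerivAt (fun u : ℝ => c * q * u) (c * q) s := by
      simpa using (hasDerivAt_id s).const_mul (c * q)
    exact h1.add h2
  have hWanti : AntitoneOn (fun u => V u ^ q + c * q * u) (Set.Icc 0 t) := by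
    apply antitoneOn_of_deriv_nonpos (convex_Icc 0 t)
    · exact fun s hs => ((hasDerivW s hs).continuousAt).continuousWithinAt
    · intro s hs
      rw [interior_Icc] at hs
      exact (hasDerivW s (Set.mem_Icc_of_Ioo hs)).differentiableAt.differentiableWithinAt
    · intro s hs
      rw [interior_Icc] at hs
      have hs' := Set.mem_Icc_of_Ioo hs
      rw [(hasDerivW s hs').deriv]
      have hVs := hVpos s hs'
      have key : V s ^ (q - 1) * V s ^ β₁ = 1 := by
        rw [← Real.rpow_add hVs]
        have hz : q - 1 + β₁ = 0 := by rw [hqdef]; ring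
        rw [hz, Real.rpow_zero]
      have h5 : q * V s ^ (q - 1) * D s ≤ q * V s ^ (q - 1) * -(c * V s ^ β₁) := by
        apply mul_le_mul_of_nonneg_left (hDle s)
        positivity
      have h6 : q * V s ^ (q - 1) * -(c * V s ^ β₁) = -(c * q) := by
        have he : q * V s ^ (q - 1) * -(c * V s ^ β₁)
            = -(c * q * (V s ^ (q - 1) * V s ^ β₁)) := by ring
        rw [he, key, mul_one]
      linarith [h5, h6.le]
  have hWt : V t ^ q + c * q * t ≤ V 0 ^ q + c * q * 0 :=
    hWanti (Set.left_mem_Icc.2 ht0) (Set.right_mem_Icc.2 ht0) ht0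
  have hVtq : 0 < V t ^ q := Real.rpow_pos_of_pos hVt q
  have hV0e : V 0 = f (x 0) - f xstar := by rw [hV]
  have hcq : V 0 ^ q ≤ c * q * t := by
    rw [div_le_iff₀ (by positivity)] at ht
    rw [hV0e]
    linarith [ht]
  rw [mul_zero] at hWt
  linarith
end

section
/- Fix c₁, c₂ > 0, p₁ > 2, 1 < p₂ < 2, and set α₁ = 2 − (p₁−2)/(p₁−1) ∈ (1,2) and α₂ = 2 − (p₂−2)/(p₂−1) > 2. Let f satisfy the strong-convexity bound ⟪v, ∇²f(x) v⟫ ≥ k‖v‖² (k > 0) with unique critical point x*. Let x : ℝ → ℝⁿ be any trajectory of the flow ẋ = −c₁∇f(x)/‖∇f(x)‖^{(p₁−2)/(p₁−1)} − c₂∇f(x)/‖∇f(x)‖^{(p₂−2)/(p₂−1)} (right-hand side taken to be 0 when ∇f(x) = 0). Then, regardless of the initial condition x(0), x(t) = x* for every t ≥ T₃ := 2^{1−α₁/2}/(c₁ k (2−α₁)) + 2^{1−α₂/2}/(c₂ k (α₂−2)); i.e. the flow is fixed-time stable with settling time bounded uniformly over all initial conditions. -/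
open scoped RealInnerProductSpace Classical

lemma slope_le_of_deriv_le {g g' : ℝ → ℝ} {a b m : ℝ} (hab : a ≤ b)
    (hg : ∀ t ∈ Set.Icc a b, HasDerivAt g (g' t) t)
    (hle : ∀ t ∈ Set.Icc a b, g' t ≤ m) : g b - g a ≤ m * (b - a) := by
  have hd : ∀ t ∈ Set.Icc a b, HasDerivAt (fun t => m * t - g t) (m - g' t) t := by
    intro t ht
    exact (((hasDerivAt_id' t).const_mul m).sub (hg t ht)).congr_deriv (by ring)
  have h : MonotoneOn (fun t => m * t - g t) (Set.Icc a b) := by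
    apply monotoneOn_of_deriv_nonneg (convex_Icc a b)
    · exact fun t ht => (hd t ht).continuousAt.continuousWithinAt
    · intro t ht
      exact (hd t (interior_subset ht)).differentiableAt.differentiableWithinAt
    · intro t ht
      rw [(hd t (interior_subset ht)).deriv]
      have := hle t (interior_subset ht); linarith
  have := h (Set.left_mem_Icc.2 hab) (Set.right_mem_Icc.2 hab) hab
  simp only at this
  nlinarith [this]

lemma slope_ge_of_deriv_ge {g g' : ℝ → ℝ} {a b m : ℝ} (hab : a ≤ b)
    (hg : ∀ t ∈ Set.Icc a b, HasDerivAt g (g' t) t)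
    (hle : ∀ t ∈ Set.Icc a b, m ≤ g' t) : m * (b - a) ≤ g b - g a := by
  have := slope_le_of_deriv_le (g := fun t => -g t) (g' := fun t => -(g' t)) (m := -m) hab
    (fun t ht => (hg t ht).neg) (fun t ht => by linarith [hle t ht])
  nlinarith [this]


lemma aux_lb_phase2 {Vt Wt k c₁ c₂ α₁ α₂ γ₂ m₂ : ℝ}
    (hk : 0 < k) (hc₁ : 0 < c₁) (hc₂ : 0 < c₂)
    (hγ₂def : γ₂ = 1 - α₂ / 2) (hm₂def : m₂ = c₂ * k * (α₂ - 2))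
    (hVpos : 0 < Vt)
    (hb : Wt ≤ -(2 * k * (c₁ * Vt ^ (α₁ / 2) + c₂ * Vt ^ (α₂ / 2))))
    (hγ₂neg : γ₂ < 0) :
    m₂ ≤ Wt * γ₂ * Vt ^ (γ₂ - 1) := by
  have h1 : 0 ≤ Vt ^ (α₁ / 2) := Real.rpow_nonneg hVpos.le _
  have hW2 : Wt ≤ -(2 * k * c₂ * Vt ^ (α₂ / 2)) := by
    nlinarith [mul_nonneg (mul_nonneg hk.le hc₁.le) h1]
  have hprod : Vt ^ (α₂ / 2) * Vt ^ (γ₂ - 1) = 1 := by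
    rw [← Real.rpow_add hVpos]
    have hz : α₂ / 2 + (γ₂ - 1) = 0 := by rw [hγ₂def]; ring
    rw [hz, Real.rpow_zero]
  have hp1 : 0 < Vt ^ (γ₂ - 1) := Real.rpow_pos_of_pos hVpos _
  have hWg : Wt * γ₂ ≥ (2 * k * c₂ * Vt ^ (α₂ / 2)) * (-γ₂) := by nlinarith
  calc m₂ = (2 * k * c₂) * (-γ₂) * (Vt ^ (α₂ / 2) * Vt ^ (γ₂ - 1)) := by
          rw [hprod, hm₂def, hγ₂def]; ring
    _ ≤ Wt * γ₂ * Vt ^ (γ₂ - 1) := by nlinarith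

lemma aux_ub_phase1 {Vt Wt k c₁ c₂ α₁ α₂ γ₁ m₁ : ℝ}
    (hk : 0 < k) (hc₁ : 0 < c₁) (hc₂ : 0 < c₂)
    (hγ₁def : γ₁ = 1 - α₁ / 2) (hm₁def : m₁ = c₁ * k * (2 - α₁))
    (hVpos : 0 < Vt)
    (hb : Wt ≤ -(2 * k * (c₁ * Vt ^ (α₁ / 2) + c₂ * Vt ^ (α₂ / 2))))
    (hγ₁pos : 0 < γ₁) :
    Wt * γ₁ * Vt ^ (γ₁ - 1) ≤ -m₁ := by
  have h2 : 0 ≤ Vt ^ (α₂ / 2) := Real.rpow_nonneg hVpos.le _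
  have hW1 : Wt ≤ -(2 * k * c₁ * Vt ^ (α₁ / 2)) := by
    nlinarith [mul_nonneg (mul_nonneg hk.le hc₂.le) h2]
  have hprod : Vt ^ (α₁ / 2) * Vt ^ (γ₁ - 1) = 1 := by
    rw [← Real.rpow_add hVpos]
    have hz : α₁ / 2 + (γ₁ - 1) = 0 := by rw [hγ₁def]; ring
    rw [hz, Real.rpow_zero]
  have hp1 : 0 < Vt ^ (γ₁ - 1) := Real.rpow_pos_of_pos hVpos _
  have hWg : Wt * γ₁ ≤ -(2 * k * c₁ * Vt ^ (α₁ / 2)) * γ₁ := by nlinarith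
  calc Wt * γ₁ * Vt ^ (γ₁ - 1)
      ≤ -(2 * k * c₁ * Vt ^ (α₁ / 2)) * γ₁ * Vt ^ (γ₁ - 1) := by nlinarith
    _ = -(2 * k * c₁ * γ₁) * (Vt ^ (α₁ / 2) * Vt ^ (γ₁ - 1)) := by ring
    _ = -m₁ := by rw [hprod, hm₁def, hγ₁def]; ring

set_option maxHeartbeats 1000000 in
/-- The flow `ẋ = −c₁∇f/‖∇f‖^{(p₁−2)/(p₁−1)} − c₂∇f/‖∇f‖^{(p₂−2)/(p₂−1)}` reaches the unique
critical point of a strongly convex `f` within the fixed time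
`T₃ = 2^{1−α₁/2}/(c₁k(2−α₁)) + 2^{1−α₂/2}/(c₂k(α₂−2))`, uniformly in the initial condition. -/
theorem fixed_time_gradient_flow_strong_convex
    {n : ℕ} (c₁ c₂ p₁ p₂ : ℝ) (hc₁ : 0 < c₁) (hc₂ : 0 < c₂)
    (hp₁ : 2 < p₁) (hp₂ : 1 < p₂) (hp₂' : p₂ < 2)
    (α₁ α₂ : ℝ) (hα₁ : α₁ = 2 - (p₁ - 2) / (p₁ - 1)) (hα₂ : α₂ = 2 - (p₂ - 2) / (p₂ - 1))
    (f : EuclideanSpace ℝ (Fin n) → ℝ) (hf : ContDiff ℝ 2 f)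
    (k : ℝ) (hk : 0 < k)
    (hconv : ∀ x v : EuclideanSpace ℝ (Fin n),
      k * ‖v‖ ^ 2 ≤ ⟪v, fderiv ℝ (gradient f) x v⟫)
    (xstar : EuclideanSpace ℝ (Fin n)) (hxstar : gradient f xstar = 0)
    (x : ℝ → EuclideanSpace ℝ (Fin n))
    (hx : ∀ t : ℝ, 0 ≤ t → HasDerivAt x
      (if gradient f (x t) = 0 then 0
       else -((c₁ / ‖gradient f (x t)‖ ^ ((p₁ - 2) / (p₁ - 1))) • gradient f (x t))
            - (c₂ / ‖gradient f (x t)‖ ^ ((p₂ - 2) / (p₂ - 1))) • gradient f (x t)) t) :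
    ∀ t : ℝ,
      2 ^ (1 - α₁ / 2) / (c₁ * k * (2 - α₁)) + 2 ^ (1 - α₂ / 2) / (c₂ * k * (α₂ - 2)) ≤ t →
      x t = xstar := by
  -- basic exponent facts
  obtain ⟨β₁, hβ₁def⟩ : ∃ β₁ : ℝ, β₁ = (p₁ - 2) / (p₁ - 1) := ⟨_, rfl⟩
  obtain ⟨β₂, hβ₂def⟩ : ∃ β₂ : ℝ, β₂ = (p₂ - 2) / (p₂ - 1) := ⟨_, rfl⟩
  have hβ₁ : 0 < β₁ := by rw [hβ₁def]; exact div_pos (by linarith) (by linarith)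
  have hβ₁' : β₁ < 1 := by
    rw [hβ₁def]; exact (div_lt_one (by linarith)).2 (by linarith)
  have hβ₂ : β₂ < 0 := by
    rw [hβ₂def]; exact div_neg_of_neg_of_pos (by linarith) (by linarith)
  have hα₁' : α₁ = 2 - β₁ := by rw [hα₁, hβ₁def]
  have hα₂' : α₂ = 2 - β₂ := by rw [hα₂, hβ₂def]
  have hα₁pos : 1 < α₁ := by rw [hα₁']; linarith
  have hα₁lt : α₁ < 2 := by rw [hα₁']; linarith
  have hα₂gt : 2 < α₂ := by rw [hα₂']; linarith
  -- settling times
  obtain ⟨γ₁, hγ₁def⟩ : ∃ γ₁ : ℝ, γ₁ = 1 - α₁ / 2 := ⟨_, rfl⟩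
  obtain ⟨γ₂, hγ₂def⟩ : ∃ γ₂ : ℝ, γ₂ = 1 - α₂ / 2 := ⟨_, rfl⟩
  have hγ₁pos : 0 < γ₁ := by rw [hγ₁def]; linarith
  have hγ₂neg : γ₂ < 0 := by rw [hγ₂def]; linarith
  obtain ⟨m₁, hm₁def⟩ : ∃ m₁ : ℝ, m₁ = c₁ * k * (2 - α₁) := ⟨_, rfl⟩
  obtain ⟨m₂, hm₂def⟩ : ∃ m₂ : ℝ, m₂ = c₂ * k * (α₂ - 2) := ⟨_, rfl⟩
  have hm₁pos : 0 < m₁ := by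
    rw [hm₁def]; exact mul_pos (mul_pos hc₁ hk) (by linarith)
  have hm₂pos : 0 < m₂ := by
    rw [hm₂def]; exact mul_pos (mul_pos hc₂ hk) (by linarith)
  obtain ⟨T₁, hT₁def⟩ : ∃ T₁ : ℝ, T₁ = 2 ^ γ₁ / m₁ := ⟨_, rfl⟩
  obtain ⟨T₂, hT₂def⟩ : ∃ T₂ : ℝ, T₂ = 2 ^ γ₂ / m₂ := ⟨_, rfl⟩
  have hT₁pos : 0 < T₁ := by
    rw [hT₁def]; exact div_pos (Real.rpow_pos_of_pos two_pos _) hm₁pos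
  have hT₂pos : 0 < T₂ := by
    rw [hT₂def]; exact div_pos (Real.rpow_pos_of_pos two_pos _) hm₂pos
  -- gradient is C¹
  have hG1 : ContDiff ℝ 1 (gradient f) := by
    have h1 : ContDiff ℝ 1 (fderiv ℝ f) := hf.fderiv_right (by norm_num)
    exact ((InnerProductSpace.toDual ℝ
      (EuclideanSpace ℝ (Fin n))).symm.toLinearIsometry.toContinuousLinearMap.contDiff).comp h1
  have hGdiff : ∀ y, HasFDerivAt (gradient f) (fderiv ℝ (gradient f) y) y :=
    fun y => (hG1.differentiable (by simp) y).hasFDerivAt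
  -- uniqueness of the critical point
  have huniq : ∀ y, gradient f y = 0 → y = xstar := by
    intro y hy
    obtain ⟨d, hddef⟩ : ∃ d, d = y - xstar := ⟨_, rfl⟩
    have hc : ∀ s : ℝ, HasDerivAt (fun s : ℝ => xstar + s • d) d s := by
      intro s
      simpa using ((hasDerivAt_id s).smul_const d).const_add xstar
    have hh : ∀ s : ℝ, HasDerivAt (fun s => ⟪gradient f (xstar + s • d), d⟫)
        (⟪fderiv ℝ (gradient f) (xstar + s • d) d, d⟫) s := by
      intro s
      have h1 : HasDerivAt (fun s : ℝ => gradient f (xstar + s • d))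
          (fderiv ℝ (gradient f) (xstar + s • d) d) s :=
        (hGdiff _).comp_hasDerivAt s (hc s)
      simpa using h1.inner ℝ (hasDerivAt_const s d)
    have hlb : ∀ s ∈ Set.Icc (0:ℝ) 1,
        k * ‖d‖ ^ 2 ≤ ⟪fderiv ℝ (gradient f) (xstar + s • d) d, d⟫ := by
      intro s _
      rw [real_inner_comm]
      exact hconv _ _
    have key := slope_ge_of_deriv_ge (m := k * ‖d‖ ^ 2) zero_le_one
      (fun s _ => hh s) hlb
    have h0 : ⟪gradient f (xstar + (0:ℝ) • d), d⟫ = 0 := by simp [hxstar]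
    have h1 : ⟪gradient f (xstar + (1:ℝ) • d), d⟫ = 0 := by
      have : xstar + (1:ℝ) • d = y := by rw [hddef]; simp
      rw [this, hy]; simp
    simp only [h0, h1] at key
    have hd0 : ‖d‖ ^ 2 ≤ 0 := by nlinarith
    have hdz : d = 0 := by
      have h2 := sq_nonneg ‖d‖
      have h3 : ‖d‖ ^ 2 = 0 := le_antisymm hd0 h2
      simpa [pow_eq_zero_iff] using h3
    rw [hddef] at hdz
    exact sub_eq_zero.1 hdz
  -- the Lyapunov function
  obtain ⟨V, hVdef⟩ : ∃ V : ℝ → ℝ, V = fun t => ‖gradient f (x t)‖ ^ 2 := ⟨_, rfl⟩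
  have hVnonneg : ∀ t, 0 ≤ V t := by
    intro t; simp only [hVdef]; exact sq_nonneg _
  -- the velocity field
  obtain ⟨F, hFdef⟩ : ∃ F : EuclideanSpace ℝ (Fin n) → EuclideanSpace ℝ (Fin n),
      F = fun y =>
        if gradient f y = 0 then 0
        else -((c₁ / ‖gradient f y‖ ^ β₁) • gradient f y)
             - (c₂ / ‖gradient f y‖ ^ β₂) • gradient f y := ⟨_, rfl⟩
  have hx' : ∀ t : ℝ, 0 ≤ t → HasDerivAt x (F (x t)) t := by
    intro t ht
    simp only [hFdef, hβ₁def, hβ₂def]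
    exact hx t ht
  -- derivative of V
  obtain ⟨W, hWdef⟩ : ∃ W : ℝ → ℝ,
      W = fun t => 2 * ⟪gradient f (x t), fderiv ℝ (gradient f) (x t) (F (x t))⟫ := ⟨_, rfl⟩
  have hVderiv : ∀ t : ℝ, 0 ≤ t → HasDerivAt V (W t) t := by
    intro t ht
    have h1 : HasDerivAt (fun t : ℝ => gradient f (x t))
        (fderiv ℝ (gradient f) (x t) (F (x t))) t :=
      (hGdiff (x t)).comp_hasDerivAt t (hx' t ht)
    have h2 := h1.inner ℝ h1
    have h3 : HasDerivAt (fun t => ⟪gradient f (x t), gradient f (x t)⟫) (W t) t := by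
      convert h2 using 1
      · rfl
      · rfl
      simp only [hWdef]
      linarith [real_inner_comm (fderiv ℝ (gradient f) (x t) (F (x t))) (gradient f (x t))]
    have hVeq : V = fun t => ⟪gradient f (x t), gradient f (x t)⟫ := by
      rw [hVdef]
      funext s
      rw [real_inner_self_eq_norm_sq]
    rw [hVeq]
    exact h3
  -- the key differential inequality
  have hWbound : ∀ t : ℝ,
      W t ≤ -(2 * k * (c₁ * (V t) ^ (α₁ / 2) + c₂ * (V t) ^ (α₂ / 2))) := by
    intro t
    by_cases hg0 : gradient f (x t) = 0
    · have hV0 : V t = 0 := by simp only [hVdef]; simp [hg0]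
      rw [hV0]
      simp only [hWdef]
      simp [hFdef, hg0, Real.zero_rpow (by positivity : α₁ / 2 ≠ 0),
        Real.zero_rpow (by positivity : α₂ / 2 ≠ 0)]
    · obtain ⟨g, hgdef⟩ : ∃ g, g = gradient f (x t) := ⟨_, rfl⟩
      obtain ⟨D, hDdef⟩ : ∃ D, D = fderiv ℝ (gradient f) (x t) := ⟨_, rfl⟩
      obtain ⟨a, hadef⟩ : ∃ a : ℝ, a = ‖g‖ := ⟨_, rfl⟩
      have hg0' : g ≠ 0 := by rw [hgdef]; exact hg0
      have ha : 0 < a := by rw [hadef]; exact norm_pos_iff.2 hg0'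
      have hDg : k * a ^ 2 ≤ ⟪g, D g⟫ := by
        rw [hadef, hgdef, hDdef]; exact hconv (x t) _
      have hcoef₁ : 0 < c₁ / a ^ β₁ := div_pos hc₁ (Real.rpow_pos_of_pos ha _)
      have hcoef₂ : 0 < c₂ / a ^ β₂ := div_pos hc₂ (Real.rpow_pos_of_pos ha _)
      have hinner : ⟪g, D (F (x t))⟫
          = -((c₁ / a ^ β₁) * ⟪g, D g⟫) - (c₂ / a ^ β₂) * ⟪g, D g⟫ := by
        rw [hgdef, hDdef, hadef]
        rw [hgdef] at hadef  -- no-op safety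
        simp only [hFdef, if_neg hg0, hgdef, map_sub, map_neg, map_smul,
          inner_sub_right, inner_neg_right, real_inner_smul_right]
      -- convert the rpow expressions
      have hVa : V t = a ^ (2:ℝ) := by
        rw [Real.rpow_two]
        simp only [hVdef, hadef, hgdef]
      have hpow : ∀ α : ℝ, (V t) ^ (α / 2) = a ^ α := by
        intro α
        rw [hVa, ← Real.rpow_mul ha.le]
        congr 1
        ring
      have hb₁ : (0:ℝ) < a ^ β₁ := Real.rpow_pos_of_pos ha _
      have hb₂ : (0:ℝ) < a ^ β₂ := Real.rpow_pos_of_pos ha _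
      have h1 : (c₁ / a ^ β₁) * (k * a ^ 2) = k * (c₁ * (V t) ^ (α₁ / 2)) := by
        rw [hpow, hα₁', Real.rpow_sub ha, Real.rpow_two]
        field_simp
      have h2 : (c₂ / a ^ β₂) * (k * a ^ 2) = k * (c₂ * (V t) ^ (α₂ / 2)) := by
        rw [hpow, hα₂', Real.rpow_sub ha, Real.rpow_two]
        field_simp
      have hgoal : W t = 2 * ⟪g, D (F (x t))⟫ := by
        simp only [hWdef, hgdef, hDdef]
      rw [hgoal, hinner]
      nlinarith [mul_le_mul_of_nonneg_left hDg hcoef₁.le,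
        mul_le_mul_of_nonneg_left hDg hcoef₂.le]
  have hWnonpos : ∀ t : ℝ, W t ≤ 0 := by
    intro t
    have hb := hWbound t
    have h1 : 0 ≤ (V t) ^ (α₁ / 2) := Real.rpow_nonneg (hVnonneg t) _
    have h2 : 0 ≤ (V t) ^ (α₂ / 2) := Real.rpow_nonneg (hVnonneg t) _
    have h3 : 0 ≤ k * (c₁ * (V t) ^ (α₁ / 2) + c₂ * (V t) ^ (α₂ / 2)) :=
      mul_nonneg hk.le (add_nonneg (mul_nonneg hc₁.le h1) (mul_nonneg hc₂.le h2))
    linarith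
  -- V is decreasing on [0, ∞)
  have hVmono : ∀ s t : ℝ, 0 ≤ s → s ≤ t → V t ≤ V s := by
    intro s t hs hst
    have := slope_le_of_deriv_le (m := 0) hst
      (fun u hu => hVderiv u (le_trans hs hu.1)) (fun u _ => hWnonpos u)
    nlinarith
  -- Phase 2 : V drops below 2 by time T₂
  have hphase2 : ∃ t₀ ∈ Set.Icc (0:ℝ) T₂, V t₀ ≤ 2 := by
    by_contra hcon
    push_neg at hcon
    have hVgt : ∀ t ∈ Set.Icc (0:ℝ) T₂, 2 < V t := hcon
    have hU : ∀ t ∈ Set.Icc (0:ℝ) T₂,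
        HasDerivAt (fun t => (V t) ^ γ₂) (W t * γ₂ * (V t) ^ (γ₂ - 1)) t := by
      intro t ht
      exact (hVderiv t ht.1).rpow_const (Or.inl (by linarith [hVgt t ht]))
    have hUlb : ∀ t ∈ Set.Icc (0:ℝ) T₂, m₂ ≤ W t * γ₂ * (V t) ^ (γ₂ - 1) := by
      intro t ht
      exact aux_lb_phase2 hk hc₁ hc₂ hγ₂def hm₂def
        (by linarith [hVgt t ht]) (hWbound t) hγ₂neg
    have key := slope_ge_of_deriv_ge (m := m₂) hT₂pos.le hU hUlb
    have hend : (V T₂) ^ γ₂ < 2 ^ γ₂ :=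
      Real.rpow_lt_rpow_of_neg two_pos (hVgt T₂ (Set.right_mem_Icc.2 hT₂pos.le)) hγ₂neg
    have hstart : 0 < (V 0) ^ γ₂ :=
      Real.rpow_pos_of_pos (by linarith [hVgt 0 (Set.left_mem_Icc.2 hT₂pos.le)]) _
    have hmT : m₂ * (T₂ - 0) = 2 ^ γ₂ := by
      rw [sub_zero, hT₂def, mul_div_cancel₀ _ hm₂pos.ne']
    rw [hmT] at key
    linarith
  obtain ⟨t₀, ht₀mem, ht₀⟩ := hphase2
  -- Phase 1 : V reaches 0 by time t₀ + T₁
  have hphase1 : V (t₀ + T₁) = 0 := by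
    by_contra h0
    have hVpos1 : 0 < V (t₀ + T₁) := lt_of_le_of_ne (hVnonneg _) (Ne.symm h0)
    obtain ⟨t₁, ht₁def⟩ : ∃ t₁ : ℝ, t₁ = t₀ + T₁ := ⟨_, rfl⟩
    rw [← ht₁def] at hVpos1
    have ht₀nonneg : 0 ≤ t₀ := ht₀mem.1
    have ht₀₁ : t₀ ≤ t₁ := by rw [ht₁def]; linarith
    have hVpos : ∀ t ∈ Set.Icc t₀ t₁, 0 < V t := by
      intro t ht
      have := hVmono t t₁ (le_trans ht₀nonneg ht.1) ht.2
      linarith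
    have hU : ∀ t ∈ Set.Icc t₀ t₁,
        HasDerivAt (fun t => (V t) ^ γ₁) (W t * γ₁ * (V t) ^ (γ₁ - 1)) t := by
      intro t ht
      exact (hVderiv t (le_trans ht₀nonneg ht.1)).rpow_const
        (Or.inl (ne_of_gt (hVpos t ht)))
    have hUub : ∀ t ∈ Set.Icc t₀ t₁, W t * γ₁ * (V t) ^ (γ₁ - 1) ≤ -m₁ := by
      intro t ht
      exact aux_ub_phase1 hk hc₁ hc₂ hγ₁def hm₁def (hVpos t ht) (hWbound t) hγ₁pos
    have key := slope_le_of_deriv_le (m := -m₁) ht₀₁ hU hUub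
    have hstart : (V t₀) ^ γ₁ ≤ 2 ^ γ₁ := Real.rpow_le_rpow (hVnonneg t₀) ht₀ hγ₁pos.le
    have hend : 0 < (V t₁) ^ γ₁ := Real.rpow_pos_of_pos hVpos1 _
    have hmT : -m₁ * (t₁ - t₀) = -(2 ^ γ₁) := by
      have hsub : t₁ - t₀ = T₁ := by rw [ht₁def]; ring
      rw [hsub, hT₁def, neg_mul, mul_div_cancel₀ _ hm₁pos.ne']
    rw [hmT] at key
    linarith
  -- conclusion
  intro t ht
  have hT₃ : T₁ + T₂ ≤ t := by
    rw [hT₁def, hT₂def, hm₁def, hm₂def, hγ₁def, hγ₂def]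
    exact ht
  have ht₁t : t₀ + T₁ ≤ t := by linarith [ht₀mem.2]
  have hVt : V t = 0 := by
    have := hVmono (t₀ + T₁) t (by linarith [ht₀mem.1, hT₁pos.le]) ht₁t
    rw [hphase1] at this
    exact le_antisymm this (hVnonneg t)
  have hgrad0 : gradient f (x t) = 0 := by
    have h : ‖gradient f (x t)‖ = 0 := by
      simp only [hVdef] at hVt
      nlinarith [norm_nonneg (gradient f (x t))]
    exact norm_eq_zero.1 h
  exact huniq (x t) hgrad0
end

section
/- Fix c₁, c₂ > 0, p₁ > 2, 1 < p₂ < 2, and set α₁ = 2 − (p₁−2)/(p₁−1) ∈ (1,2) and α₂ = 2 − (p₂−2)/(p₂−1) > 2. Let f satisfy the Polyak–Łojasiewicz inequality with constant μ_f > 0 and have unique minimizer x* with f* = f(x*). Let x : ℝ → ℝⁿ be any trajectory of the flow ẋ = −c₁∇f(x)/‖∇f(x)‖^{(p₁−2)/(p₁−1)} − c₂∇f(x)/‖∇f(x)‖^{(p₂−2)/(p₂−1)} (right-hand side taken to be 0 when ∇f(x) = 0). Then, regardless of the initial condition x(0), f(x(t)) = f* for every t ≥ T₃ := 4/(c₁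 (2μ_f)^{α₁/2} (2−α₁)) + 4/(c₂ (2μ_f)^{α₂/2} (α₂−2)). -/
open scoped RealInnerProductSpace Classical

private lemma aux_antitone {φ dφ : ℝ → ℝ} {a b : ℝ}
    (h : ∀ t ∈ Set.Icc a b, HasDerivAt φ (dφ t) t)
    (h' : ∀ t ∈ Set.Icc a b, dφ t ≤ 0) : AntitoneOn φ (Set.Icc a b) := by
  apply antitoneOn_of_deriv_nonpos (convex_Icc a b)
    (fun t ht => (h t ht).continuousAt.continuousWithinAt)
  · rw [interior_Icc]
    exact fun t ht => ((h t (Set.Ioo_subset_Icc_self ht)).differentiableAt).differentiableWithinAt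
  · rw [interior_Icc]
    intro t ht
    rw [(h t (Set.Ioo_subset_Icc_self ht)).deriv]
    exact h' t (Set.Ioo_subset_Icc_self ht)

set_option maxHeartbeats 1000000 in
/-- The flow `ẋ = −c₁∇f/‖∇f‖^{(p₁−2)/(p₁−1)} − c₂∇f/‖∇f‖^{(p₂−2)/(p₂−1)}` drives a
gradient-dominated (PL) function to its minimum value within the fixed time
`T₃ = 4/(c₁(2μ_f)^{α₁/2}(2−α₁)) + 4/(c₂(2μ_f)^{α₂/2}(α₂−2))`, uniformly in the initial
condition. -/
theorem fixed_time_gradient_flow_PL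
    {n : ℕ} (c₁ c₂ p₁ p₂ : ℝ) (hc₁ : 0 < c₁) (hc₂ : 0 < c₂)
    (hp₁ : 2 < p₁) (hp₂ : 1 < p₂) (hp₂' : p₂ < 2)
    (α₁ α₂ : ℝ) (hα₁ : α₁ = 2 - (p₁ - 2) / (p₁ - 1)) (hα₂ : α₂ = 2 - (p₂ - 2) / (p₂ - 1))
    (f : EuclideanSpace ℝ (Fin n) → ℝ) (hf : ContDiff ℝ 1 f)
    (μf : ℝ) (hμf : 0 < μf)
    (xstar : EuclideanSpace ℝ (Fin n))
    (hmin : ∀ y, f xstar ≤ f y)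
    (huniq : ∀ y, f y = f xstar → y = xstar)
    (hPL : ∀ y : EuclideanSpace ℝ (Fin n),
      μf * (f y - f xstar) ≤ (1 / 2) * ‖gradient f y‖ ^ 2)
    (x : ℝ → EuclideanSpace ℝ (Fin n))
    (hx : ∀ t : ℝ, 0 ≤ t → HasDerivAt x
      (if gradient f (x t) = 0 then 0
       else -((c₁ / ‖gradient f (x t)‖ ^ ((p₁ - 2) / (p₁ - 1))) • gradient f (x t))
            - (c₂ / ‖gradient f (x t)‖ ^ ((p₂ - 2) / (p₂ - 1))) • gradient f (x t)) t) :
    ∀ t : ℝ,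
      4 / (c₁ * (2 * μf) ^ (α₁ / 2) * (2 - α₁)) + 4 / (c₂ * (2 * μf) ^ (α₂ / 2) * (α₂ - 2)) ≤ t →
      f (x t) = f xstar := by
  -- basic exponent facts
  have hα₁1 : 1 < α₁ := by
    rw [hα₁]
    have h1 : 0 < p₁ - 1 := by linarith
    rw [show (2:ℝ) - (p₁-2)/(p₁-1) = 1 + (1 - (p₁-2)/(p₁-1)) by ring]
    have : (p₁-2)/(p₁-1) < 1 := by rw [div_lt_one h1]; linarith
    linarith
  have hα₁2 : α₁ < 2 := by
    rw [hα₁]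
    have h1 : 0 < p₁ - 1 := by linarith
    have : 0 < (p₁-2)/(p₁-1) := div_pos (by linarith) h1
    linarith
  have hα₂2 : 2 < α₂ := by
    rw [hα₂]
    have h1 : 0 < p₂ - 1 := by linarith
    have : (p₂-2)/(p₂-1) < 0 := div_neg_of_neg_of_pos (by linarith) h1
    linarith
  set V : ℝ → ℝ := fun t => f (x t) - f xstar with hVdef
  set C₁ : ℝ := c₁ * (2*μf) ^ (α₁/2) with hC₁def
  set C₂ : ℝ := c₂ * (2*μf) ^ (α₂/2) with hC₂def
  clear_value V C₁ C₂
  have hVnonneg : ∀ t, 0 ≤ V t := fun t => by rw [hVdef]; exact sub_nonneg.2 (hmin _)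
  have hμ2 : (0:ℝ) < 2*μf := by linarith
  have hC₁ : 0 < C₁ := hC₁def ▸ mul_pos hc₁ (Real.rpow_pos_of_pos hμ2 _)
  have hC₂ : 0 < C₂ := hC₂def ▸ mul_pos hc₂ (Real.rpow_pos_of_pos hμ2 _)
  -- derivative of V with differential inequality
  have key : ∀ t : ℝ, 0 ≤ t → HasDerivAt V (deriv V t) t ∧
      deriv V t ≤ -(C₁ * V t ^ (α₁/2) + C₂ * V t ^ (α₂/2)) := by
    intro t ht
    set g : EuclideanSpace ℝ (Fin n) := gradient f (x t) with hg
    have hfd : HasFDerivAt f ((InnerProductSpace.toDual ℝ _) g) (x t) :=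
      (((hf.differentiable one_ne_zero) (x t)).hasGradientAt).hasFDerivAt
    have hder := hfd.comp_hasDerivAt t (hx t ht)
    simp only [Function.comp_def, InnerProductSpace.toDual_apply_apply] at hder
    have hderV : HasDerivAt V (⟪g, (if g = 0 then 0
       else -((c₁ / ‖g‖ ^ ((p₁ - 2) / (p₁ - 1))) • g)
            - (c₂ / ‖g‖ ^ ((p₂ - 2) / (p₂ - 1))) • g)⟫) t := by
      simp only [hVdef]
      exact hder.sub_const _
    by_cases hg0 : g = 0
    · have hV0 : V t = 0 := by
        have h := hPL (x t)
        rw [← hg, hg0] at h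
        simp at h
        have h' : μf * V t ≤ 0 := by simp only [hVdef]; nlinarith
        nlinarith [hVnonneg t]
      rw [if_pos hg0] at hderV
      simp only [inner_zero_right] at hderV
      refine ⟨hderV.deriv ▸ hderV, ?_⟩
      rw [hderV.deriv, hV0, Real.zero_rpow (by positivity), Real.zero_rpow (by positivity)]
      norm_num
    · rw [if_neg hg0] at hderV
      have hgnorm : 0 < ‖g‖ := norm_pos_iff.2 hg0
      have hin : ⟪g, -((c₁ / ‖g‖ ^ ((p₁ - 2) / (p₁ - 1))) • g)
            - (c₂ / ‖g‖ ^ ((p₂ - 2) / (p₂ - 1))) • g⟫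
          = -(c₁ * ‖g‖ ^ α₁ + c₂ * ‖g‖ ^ α₂) := by
        rw [inner_sub_right, inner_neg_right, real_inner_smul_right, real_inner_smul_right,
          real_inner_self_eq_norm_sq]
        have hns : (‖g‖:ℝ) ^ (2:ℕ) = ‖g‖ ^ ((2:ℝ)) := by
          rw [← Real.rpow_natCast ‖g‖ 2]; norm_num
        have e1 : c₁ / ‖g‖ ^ ((p₁ - 2) / (p₁ - 1)) * ‖g‖ ^ 2 = c₁ * ‖g‖ ^ α₁ := by
          rw [div_mul_eq_mul_div, mul_div_assoc, hns, ← Real.rpow_sub hgnorm, ← hα₁]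
        have e2 : c₂ / ‖g‖ ^ ((p₂ - 2) / (p₂ - 1)) * ‖g‖ ^ 2 = c₂ * ‖g‖ ^ α₂ := by
          rw [div_mul_eq_mul_div, mul_div_assoc, hns, ← Real.rpow_sub hgnorm, ← hα₂]
        rw [e1, e2]; ring
      rw [hin] at hderV
      refine ⟨hderV.deriv ▸ hderV, ?_⟩
      rw [hderV.deriv]
      -- use PL: (2μ V)^(α/2) ≤ ‖g‖^α
      have hPLt : 2*μf * V t ≤ ‖g‖ ^ (2:ℕ) := by
        have h := hPL (x t)
        rw [← hg] at h
        have h' : μf * V t ≤ 1/2 * ‖g‖ ^ 2 := by simp only [hVdef]; exact h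
        nlinarith
      have hpow : ∀ α : ℝ, 0 < α → (2*μf) ^ (α/2) * V t ^ (α/2) ≤ ‖g‖ ^ α := by
        intro α hα
        have h1 : (2*μf * V t) ^ (α/2) ≤ (‖g‖ ^ (2:ℕ)) ^ (α/2) :=
          Real.rpow_le_rpow (mul_nonneg hμ2.le (hVnonneg t)) hPLt (by positivity)
        calc (2*μf) ^ (α/2) * V t ^ (α/2)
            = (2*μf * V t) ^ (α/2) := (Real.mul_rpow (le_of_lt hμ2) (hVnonneg t)).symm
          _ ≤ (‖g‖ ^ (2:ℕ)) ^ (α/2) := h1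
          _ = ‖g‖ ^ α := by
              rw [← Real.rpow_natCast ‖g‖ 2, ← Real.rpow_mul (norm_nonneg g)]
              congr 1
              push_cast; ring
      have h1 := hpow α₁ (by linarith)
      have h2 := hpow α₂ (by linarith)
      have := mul_le_mul_of_nonneg_left h1 hc₁.le
      have := mul_le_mul_of_nonneg_left h2 hc₂.le
      rw [hC₁def, hC₂def]
      nlinarith
  -- positivity of time constants
  have h2α₁ : 0 < 2 - α₁ := by linarith
  have hα₂m2 : 0 < α₂ - 2 := by linarith
  set Ta2 : ℝ := 2 / (C₁ * (2 - α₁)) with hTa2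
  set Tb2 : ℝ := 2 / (C₂ * (α₂ - 2)) with hTb2
  clear_value Ta2 Tb2
  have hTa2pos : 0 < Ta2 := by rw [hTa2]; positivity
  have hTb2pos : 0 < Tb2 := by rw [hTb2]; positivity
  intro t htT
  have htT' : 2 * Ta2 + 2 * Tb2 ≤ t := by
    rw [hTa2, hTb2]
    have e1 : 2 * (2 / (C₁ * (2 - α₁))) = 4 / (C₁ * (2 - α₁)) := by ring
    have e2 : 2 * (2 / (C₂ * (α₂ - 2))) = 4 / (C₂ * (α₂ - 2)) := by ring
    linarith [htT]
  have ht0 : 0 ≤ t := by linarith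
  -- conclude from V t = 0
  have hsuff : V t = 0 → f (x t) = f xstar := by
    simp only [hVdef]; intro h; linarith
  apply hsuff
  by_contra hVt0
  have hVtpos : 0 < V t := lt_of_le_of_ne (hVnonneg t) (Ne.symm hVt0)
  -- V is antitone on [0, t]
  have hanti : AntitoneOn V (Set.Icc 0 t) := by
    apply aux_antitone (fun s hs => (key s hs.1).1)
    intro s hs
    have hb := (key s hs.1).2
    have h1 : (0:ℝ) ≤ V s ^ (α₁/2) := Real.rpow_nonneg (hVnonneg s) _
    have h2 : (0:ℝ) ≤ V s ^ (α₂/2) := Real.rpow_nonneg (hVnonneg s) _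
    linarith [mul_nonneg hC₁.le h1, mul_nonneg hC₂.le h2]
  have hVpos : ∀ s ∈ Set.Icc (0:ℝ) t, 0 < V s := by
    intro s hs
    exact lt_of_lt_of_le hVtpos (hanti hs (Set.right_mem_Icc.2 ht0) hs.2)
  have hTb2t : Tb2 ≤ t := by linarith
  have hTb2mem : Tb2 ∈ Set.Icc (0:ℝ) t := ⟨hTb2pos.le, hTb2t⟩
  -- Step 1 : V Tb2 < 1
  have hstep1 : V Tb2 < 1 := by
    by_contra hge
    push_neg at hge
    have hge1 : ∀ s ∈ Set.Icc (0:ℝ) Tb2, 1 ≤ V s := by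
      intro s hs
      exact le_trans hge (hanti ⟨hs.1, le_trans hs.2 hTb2t⟩ hTb2mem hs.2)
    have hφder : ∀ s ∈ Set.Icc (0:ℝ) Tb2,
        HasDerivAt (fun s => s - Tb2 * V s ^ (1 - α₂/2))
          (1 - Tb2 * (deriv V s * (1 - α₂/2) * V s ^ (1 - α₂/2 - 1))) s := by
      intro s hs
      have hVs : 0 < V s := by linarith [hge1 s hs]
      exact (hasDerivAt_id' s).sub
        ((((key s hs.1).1).rpow_const (Or.inl hVs.ne')).const_mul Tb2)
    have hφle : ∀ s ∈ Set.Icc (0:ℝ) Tb2,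
        (1 - Tb2 * (deriv V s * (1 - α₂/2) * V s ^ (1 - α₂/2 - 1))) ≤ 0 := by
      intro s hs
      have hVs : 0 < V s := by linarith [hge1 s hs]
      have hb := (key s hs.1).2
      have h1 : (0:ℝ) ≤ V s ^ (α₁/2) := Real.rpow_nonneg (hVnonneg s) _
      have hdle : deriv V s ≤ -(C₂ * V s ^ (α₂/2)) := by
        linarith [mul_nonneg hC₁.le h1]
      have hγpos : (0:ℝ) < V s ^ (1 - α₂/2 - 1) := Real.rpow_pos_of_pos hVs _
      have hprod : V s ^ (α₂/2) * V s ^ (1 - α₂/2 - 1) = 1 := by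
        rw [← Real.rpow_add hVs, show α₂/2 + (1 - α₂/2 - 1) = 0 by ring, Real.rpow_zero]
      have hTb2C : Tb2 * (C₂ * (α₂ - 2)) = 2 := by
        rw [hTb2]; field_simp
      -- deriv V s * (1 - α₂/2) ≥ C₂ * V s^(α₂/2) * (α₂/2 - 1)
      have hstep : C₂ * V s ^ (α₂/2) * (α₂/2 - 1) ≤ deriv V s * (1 - α₂/2) := by
        have h := mul_le_mul_of_nonneg_right hdle (show (0:ℝ) ≤ α₂/2 - 1 by linarith)
        nlinarith
      have hstep2 : C₂ * (α₂/2 - 1) * (V s ^ (α₂/2) * V s ^ (1 - α₂/2 - 1))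
          ≤ deriv V s * (1 - α₂/2) * V s ^ (1 - α₂/2 - 1) := by
        have := mul_le_mul_of_nonneg_right hstep hγpos.le
        nlinarith
      rw [hprod] at hstep2
      have := mul_le_mul_of_nonneg_left hstep2 hTb2pos.le
      nlinarith
    have hφanti := aux_antitone hφder hφle
    have h0mem : (0:ℝ) ∈ Set.Icc (0:ℝ) Tb2 := Set.left_mem_Icc.2 hTb2pos.le
    have hTmem : Tb2 ∈ Set.Icc (0:ℝ) Tb2 := Set.right_mem_Icc.2 hTb2pos.le
    have hmono := hφanti h0mem hTmem hTb2pos.le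
    simp only at hmono
    -- hmono : Tb2 - Tb2 * V Tb2 ^ (1-α₂/2) ≤ 0 - Tb2 * V 0 ^ (1-α₂/2)
    have hVb1 : V Tb2 ^ (1 - α₂/2) ≤ 1 :=
      Real.rpow_le_one_of_one_le_of_nonpos hge (by linarith)
    have hV0γ : 0 < V 0 ^ (1 - α₂/2) :=
      Real.rpow_pos_of_pos (hVpos 0 (Set.left_mem_Icc.2 ht0)) _
    nlinarith
  -- Step 2 : contradiction on [Tb2, t]
  have hφ₁der : ∀ s ∈ Set.Icc Tb2 t,
      HasDerivAt (fun s => s + Ta2 * V s ^ (1 - α₁/2))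
        (1 + Ta2 * (deriv V s * (1 - α₁/2) * V s ^ (1 - α₁/2 - 1))) s := by
    intro s hs
    have hs0 : 0 ≤ s := le_trans hTb2pos.le hs.1
    have hVs : 0 < V s := hVpos s ⟨hs0, hs.2⟩
    exact (hasDerivAt_id' s).add
      ((((key s hs0).1).rpow_const (Or.inl hVs.ne')).const_mul Ta2)
  have hφ₁le : ∀ s ∈ Set.Icc Tb2 t,
      (1 + Ta2 * (deriv V s * (1 - α₁/2) * V s ^ (1 - α₁/2 - 1))) ≤ 0 := by
    intro s hs
    have hs0 : 0 ≤ s := le_trans hTb2pos.le hs.1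
    have hVs : 0 < V s := hVpos s ⟨hs0, hs.2⟩
    have hb := (key s hs0).2
    have h2 : (0:ℝ) ≤ V s ^ (α₂/2) := Real.rpow_nonneg (hVnonneg s) _
    have hdle : deriv V s ≤ -(C₁ * V s ^ (α₁/2)) := by
      linarith [mul_nonneg hC₂.le h2]
    have hγpos : (0:ℝ) < V s ^ (1 - α₁/2 - 1) := Real.rpow_pos_of_pos hVs _
    have hprod : V s ^ (α₁/2) * V s ^ (1 - α₁/2 - 1) = 1 := by
      rw [← Real.rpow_add hVs, show α₁/2 + (1 - α₁/2 - 1) = 0 by ring, Real.rpow_zero]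
    have hTa2C : Ta2 * (C₁ * (2 - α₁)) = 2 := by
      rw [hTa2]; field_simp
    have hstep : deriv V s * (1 - α₁/2) ≤ -(C₁ * V s ^ (α₁/2)) * (1 - α₁/2) :=
      mul_le_mul_of_nonneg_right hdle (by linarith)
    have hstep2 : deriv V s * (1 - α₁/2) * V s ^ (1 - α₁/2 - 1)
        ≤ -(C₁ * (1 - α₁/2)) * (V s ^ (α₁/2) * V s ^ (1 - α₁/2 - 1)) := by
      have := mul_le_mul_of_nonneg_right hstep hγpos.le
      nlinarith
    rw [hprod] at hstep2
    have := mul_le_mul_of_nonneg_left hstep2 hTa2pos.le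
    nlinarith
  have hφ₁anti := aux_antitone hφ₁der hφ₁le
  have hmem1 : Tb2 ∈ Set.Icc Tb2 t := Set.left_mem_Icc.2 hTb2t
  have hmem2 : t ∈ Set.Icc Tb2 t := Set.right_mem_Icc.2 hTb2t
  have hmono := hφ₁anti hmem1 hmem2 hTb2t
  simp only at hmono
  have hVbγ : V Tb2 ^ (1 - α₁/2) < 1 :=
    Real.rpow_lt_one (hVpos Tb2 hTb2mem).le hstep1 (by linarith)
  have hVtγ : 0 < V t ^ (1 - α₁/2) :=
    Real.rpow_pos_of_pos hVtpos _
  nlinarith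
end

section
/- Let f : ℝⁿ → ℝ be convex, differentiable, with L-Lipschitz gradient (L > 0). Let A be a real m×n matrix of rank m (full row rank) and b ∈ ℝᵐ. Suppose that for every ν ∈ ℝᵐ the set { ⟪−Aᵀν, x⟫ − f(x) : x ∈ ℝⁿ } is bounded above, and define f*(−Aᵀν) as its supremum (the convex conjugate of f evaluated at −Aᵀν). Then the dual function g(ν) = −⟪ν, b⟫ − f*(−Aᵀν) is strictly concave on ℝᵐ. -/
open scoped RealInnerProductSpace
open Matrix

section aux

variable {n : ℕ}

/-- Descent lemma: an `L`-smooth function satisfies a quadratic upper bound. -/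
lemma descent_lemma (f : EuclideanSpace ℝ (Fin n) → ℝ) (hdiff : Differentiable ℝ f)
    (L : NNReal) (hlip : LipschitzWith L (gradient f)) (x y : EuclideanSpace ℝ (Fin n)) :
    f y ≤ f x + ⟪gradient f x, y - x⟫ + (L : ℝ) / 2 * ‖y - x‖ ^ 2 := by
  set v := y - x with hv
  have key : ∀ t : ℝ, HasDerivAt (fun t : ℝ => f (x + t • v))
      ⟪gradient f (x + t • v), v⟫ t := by
    intro t
    have h1 : HasDerivAt (fun t : ℝ => x + t • v) v t := by
      simpa using ((hasDerivAt_id t).smul_const v).const_add x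
    have h2 := (hdiff (x + t • v)).hasGradientAt.hasFDerivAt
    have := h2.comp_hasDerivAt t h1
    exact this.congr_deriv (by simp)
  have hgradcont : Continuous (gradient f) := hlip.continuous
  have hcont : Continuous fun t : ℝ => ⟪gradient f (x + t • v), v⟫ := by
    exact (hgradcont.comp (by continuity)).inner continuous_const
  have hint : f (x + (1:ℝ) • v) - f (x + (0:ℝ) • v)
      = ∫ t in (0:ℝ)..1, ⟪gradient f (x + t • v), v⟫ := by
    rw [intervalIntegral.integral_eq_sub_of_hasDerivAt (fun t _ => key t)
      (hcont.intervalIntegrable 0 1)]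
  have hfy : f y - f x = ∫ t in (0:ℝ)..1, ⟪gradient f (x + t • v), v⟫ := by
    simpa [hv] using hint
  have hmono : (∫ t in (0:ℝ)..1, ⟪gradient f (x + t • v), v⟫)
      ≤ ∫ t in (0:ℝ)..1, (⟪gradient f x, v⟫ + (L : ℝ) * t * ‖v‖ ^ 2) := by
    apply intervalIntegral.integral_mono_on (by norm_num)
      (hcont.intervalIntegrable 0 1)
      (((continuous_const.add (((continuous_const.mul continuous_id).mul
        continuous_const))).intervalIntegrable 0 1))
    intro t ht
    have h1 : ⟪gradient f (x + t • v) - gradient f x, v⟫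
        ≤ ‖gradient f (x + t • v) - gradient f x‖ * ‖v‖ :=
      real_inner_le_norm _ _
    have h2 : ‖gradient f (x + t • v) - gradient f x‖ ≤ (L : ℝ) * ‖t • v‖ := by
      have := hlip.dist_le_mul (x + t • v) x
      simpa [dist_eq_norm] using this
    have h3 : ‖t • v‖ = t * ‖v‖ := by
      rw [norm_smul, Real.norm_eq_abs, abs_of_nonneg ht.1]
    have h4 : ⟪gradient f (x + t • v), v⟫ = ⟪gradient f x, v⟫
        + ⟪gradient f (x + t • v) - gradient f x, v⟫ := by
      rw [inner_sub_left]; ring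
    have hnv : (0:ℝ) ≤ ‖v‖ := norm_nonneg _
    rw [h3] at h2
    have h5 : ⟪gradient f (x + t • v) - gradient f x, v⟫ ≤ (L : ℝ) * t * ‖v‖ ^ 2 := by
      calc ⟪gradient f (x + t • v) - gradient f x, v⟫
          ≤ ‖gradient f (x + t • v) - gradient f x‖ * ‖v‖ := h1
        _ ≤ (L : ℝ) * (t * ‖v‖) * ‖v‖ := mul_le_mul_of_nonneg_right h2 hnv
        _ = (L : ℝ) * t * ‖v‖ ^ 2 := by ring
    simp only [Pi.add_apply, Pi.mul_apply, id]
    linarith [h4, h5]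
  have hval : (∫ t in (0:ℝ)..1, (⟪gradient f x, v⟫ + (L : ℝ) * t * ‖v‖ ^ 2))
      = ⟪gradient f x, v⟫ + (L : ℝ) / 2 * ‖v‖ ^ 2 := by
    have : (fun t : ℝ => ⟪gradient f x, v⟫ + (L : ℝ) * t * ‖v‖ ^ 2)
        = fun t : ℝ => ⟪gradient f x, v⟫ + ((L : ℝ) * ‖v‖ ^ 2) * t := by
      funext t; ring
    rw [this, intervalIntegral.integral_add intervalIntegrable_const
      ((by continuity : Continuous fun t : ℝ => (L : ℝ) * ‖v‖ ^ 2 * t).intervalIntegrable 0 1),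
      intervalIntegral.integral_const, intervalIntegral.integral_const_mul,
      integral_id]
    norm_num
    ring
  linarith [hfy ▸ (hmono.trans_eq hval)]

end aux

/-- Scalar arithmetic identity used in the strong-convexity estimate. -/
lemma dual_arith (a Lr I1 I2 J1 J2 G N Fx : ℝ) (hLr : Lr ≠ 0) (hJ : J2 - J1 = N) :
    a * ((I1 - ((1 - a) / Lr) * J1)
        - (Fx - ((1 - a) / Lr) * G + Lr / 2 * (((1 - a) / Lr) ^ 2 * N)))
      + (1 - a) * ((I2 + (a / Lr) * J2)
        - (Fx + (a / Lr) * G + Lr / 2 * ((a / Lr) ^ 2 * N)))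
    = (a * I1 + (1 - a) * I2) - Fx + a * (1 - a) / (2 * Lr) * N := by
  subst hJ
  field_simp
  ring

/-- If `f` is convex and differentiable with `L`-Lipschitz gradient and `A` has full row
rank, then the dual function `g(ν) = −⟪ν, b⟫ − f*(−Aᵀν)` is strictly concave. -/
theorem dual_function_strictly_concave
    {n m : ℕ} (f : EuclideanSpace ℝ (Fin n) → ℝ)
    (hconv : ConvexOn ℝ Set.univ f) (hdiff : Differentiable ℝ f)
    (L : NNReal) (hL : 0 < L) (hlip : LipschitzWith L (gradient f))
    (A : Matrix (Fin m) (Fin n) ℝ) (hA : A.rank = m) (b : EuclideanSpace ℝ (Fin m))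
    (hbdd : ∀ ν : EuclideanSpace ℝ (Fin m),
      BddAbove (Set.range fun x : EuclideanSpace ℝ (Fin n) =>
        ⟪-(Matrix.toEuclideanLin Aᵀ ν), x⟫ - f x)) :
    StrictConcaveOn ℝ Set.univ (fun ν : EuclideanSpace ℝ (Fin m) =>
      -⟪ν, b⟫ - sSup (Set.range fun x : EuclideanSpace ℝ (Fin n) =>
        ⟪-(Matrix.toEuclideanLin Aᵀ ν), x⟫ - f x)) := by
  have hL' : (0:ℝ) < L := hL
  set T := Matrix.toEuclideanLin Aᵀ with hT
  -- injectivity of T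
  have hinj : Function.Injective T := by
    have hker : LinearMap.ker (Aᵀ.mulVecLin) = ⊥ := by
      have hrank : Aᵀ.rank = m := by rw [Matrix.rank_transpose, hA]
      have h2 := LinearMap.finrank_range_add_finrank_ker (Aᵀ.mulVecLin)
      rw [Matrix.rank] at hrank
      rw [hrank] at h2
      simp only [Module.finrank_fin_fun] at h2
      have : Module.finrank ℝ (LinearMap.ker Aᵀ.mulVecLin) = 0 := by omega
      exact Submodule.finrank_eq_zero.mp this
    have hmv : Function.Injective (Aᵀ.mulVecLin) := LinearMap.ker_eq_bot.mp hker
    intro v w hvw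
    have h1 : Aᵀ *ᵥ (WithLp.equiv 2 (Fin m → ℝ)) v = Aᵀ *ᵥ (WithLp.equiv 2 (Fin m → ℝ)) w := by
      have := congrArg (WithLp.equiv 2 (Fin n → ℝ)) hvw
      simpa [hT, Matrix.toEuclideanLin_apply] using this
    have := hmv h1
    exact (WithLp.equiv 2 (Fin m → ℝ)).injective this
  constructor
  · exact convex_univ
  intro ν₁ _ ν₂ _ hne a c ha hc hac
  have hcc : c = 1 - a := by linarith
  subst hcc
  simp only [smul_eq_mul]
  set S : EuclideanSpace ℝ (Fin m) → ℝ := fun ν =>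
    sSup (Set.range fun x : EuclideanSpace ℝ (Fin n) => ⟪-(T ν), x⟫ - f x) with hS
  set u₁ := T ν₁ with hu₁
  set u₂ := T ν₂ with hu₂
  set d := u₁ - u₂ with hd
  have hdne : d ≠ 0 := by
    intro h
    exact hne (hinj (by rwa [hd, sub_eq_zero] at h))
  have hN : (0:ℝ) < ‖d‖ ^ 2 := pow_pos (norm_pos_iff.mpr hdne) 2
  have hTt : T (a • ν₁ + (1 - a) • ν₂) = a • u₁ + (1 - a) • u₂ := by
    rw [map_add, LinearMap.map_smul, LinearMap.map_smul]
  -- key estimate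
  have key : S (a • ν₁ + (1 - a) • ν₂)
      ≤ a * S ν₁ + (1 - a) * S ν₂ - a * (1 - a) / (2 * L) * ‖d‖ ^ 2 := by
    apply csSup_le (Set.range_nonempty _)
    rintro z ⟨x, rfl⟩
    set x₁ := x - ((1 - a) / L) • d with hx₁
    set x₂ := x + (a / L) • d with hx₂
    have h₁ : ⟪-u₁, x₁⟫ - f x₁ ≤ S ν₁ := le_csSup (hbdd ν₁) ⟨x₁, rfl⟩
    have h₂ : ⟪-u₂, x₂⟫ - f x₂ ≤ S ν₂ := le_csSup (hbdd ν₂) ⟨x₂, rfl⟩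
    have hdes₁ : f x₁ ≤ f x - ((1 - a) / L) * ⟪gradient f x, d⟫
        + (L:ℝ) / 2 * (((1 - a) / L) ^ 2 * ‖d‖ ^ 2) := by
      have := descent_lemma f hdiff L hlip x x₁
      have hxx : x₁ - x = -(((1 - a) / L) • d) := by rw [hx₁]; abel
      rw [hxx] at this
      have h5 : ‖-(((1 - a) / L) • d)‖ ^ 2 = ((1 - a) / L) ^ 2 * ‖d‖ ^ 2 := by
        rw [norm_neg, norm_smul, Real.norm_eq_abs, mul_pow, sq_abs]
      rw [inner_neg_right, real_inner_smul_right, h5] at this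
      linarith
    have hdes₂ : f x₂ ≤ f x + (a / L) * ⟪gradient f x, d⟫
        + (L:ℝ) / 2 * ((a / L) ^ 2 * ‖d‖ ^ 2) := by
      have := descent_lemma f hdiff L hlip x x₂
      have hxx : x₂ - x = (a / L) • d := by rw [hx₂]; abel
      rw [hxx] at this
      have h5 : ‖(a / L) • d‖ ^ 2 = (a / L) ^ 2 * ‖d‖ ^ 2 := by
        rw [norm_smul, Real.norm_eq_abs, mul_pow, sq_abs]
      rw [real_inner_smul_right, h5] at this
      linarith
    have hI₁ : ⟪-u₁, x₁⟫ = ⟪-u₁, x⟫ - ((1 - a) / L) * ⟪-u₁, d⟫ := by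
      rw [hx₁, inner_sub_right, real_inner_smul_right]
    have hI₂ : ⟪-u₂, x₂⟫ = ⟪-u₂, x⟫ + (a / L) * ⟪-u₂, d⟫ := by
      rw [hx₂, inner_add_right, real_inner_smul_right]
    have hIt : ⟪-(T (a • ν₁ + (1 - a) • ν₂)), x⟫
        = a * ⟪-u₁, x⟫ + (1 - a) * ⟪-u₂, x⟫ := by
      rw [hTt, inner_neg_left, inner_add_left, real_inner_smul_left,
        real_inner_smul_left, inner_neg_left, inner_neg_left]
      ring
    have hJ : ⟪-u₂, d⟫ - ⟪-u₁, d⟫ = ‖d‖ ^ 2 := by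
      rw [← inner_sub_left]
      have : -u₂ - -u₁ = d := by rw [hd]; abel
      rw [this, real_inner_self_eq_norm_sq]
    have e₁ : a * (⟪-u₁, x₁⟫ - f x₁) ≤ a * S ν₁ := mul_le_mul_of_nonneg_left h₁ ha.le
    have e₂ : (1 - a) * (⟪-u₂, x₂⟫ - f x₂) ≤ (1 - a) * S ν₂ :=
      mul_le_mul_of_nonneg_left h₂ hc.le
    have lb₁ : a * ((⟪-u₁, x⟫ - ((1 - a) / L) * ⟪-u₁, d⟫)
        - (f x - ((1 - a) / L) * ⟪gradient f x, d⟫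
          + (L:ℝ) / 2 * (((1 - a) / L) ^ 2 * ‖d‖ ^ 2)))
        ≤ a * (⟪-u₁, x₁⟫ - f x₁) := by
      apply mul_le_mul_of_nonneg_left _ ha.le
      rw [hI₁]; linarith
    have lb₂ : (1 - a) * ((⟪-u₂, x⟫ + (a / L) * ⟪-u₂, d⟫)
        - (f x + (a / L) * ⟪gradient f x, d⟫
          + (L:ℝ) / 2 * ((a / L) ^ 2 * ‖d‖ ^ 2)))
        ≤ (1 - a) * (⟪-u₂, x₂⟫ - f x₂) := by
      apply mul_le_mul_of_nonneg_left _ hc.le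
      rw [hI₂]; linarith
    have hident := dual_arith a (L:ℝ) ⟪-u₁, x⟫ ⟪-u₂, x⟫ ⟪-u₁, d⟫ ⟪-u₂, d⟫
      ⟪gradient f x, d⟫ (‖d‖ ^ 2) (f x) (ne_of_gt hL') hJ
    show ⟪-(T (a • ν₁ + (1 - a) • ν₂)), x⟫ - f x
        ≤ a * S ν₁ + (1 - a) * S ν₂ - a * (1 - a) / (2 * L) * ‖d‖ ^ 2
    rw [hIt]
    linarith [e₁, e₂, lb₁, lb₂, hident.le, hident.ge]
  have hpos : 0 < a * (1 - a) / (2 * L) * ‖d‖ ^ 2 := by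
    apply mul_pos _ hN
    apply div_pos (mul_pos ha hc) (by linarith)
  have hlin : ⟪a • ν₁ + (1 - a) • ν₂, b⟫ = a * ⟪ν₁, b⟫ + (1 - a) * ⟪ν₂, b⟫ := by
    rw [inner_add_left, real_inner_smul_left, real_inner_smul_left]
  show a * (-⟪ν₁, b⟫ - S ν₁) + (1 - a) * (-⟪ν₂, b⟫ - S ν₂)
      < -⟪a • ν₁ + (1 - a) • ν₂, b⟫ - S (a • ν₁ + (1 - a) • ν₂)
  rw [hlin]
  linarith
end

section
/- Let f : ℝⁿ → ℝ be convex, differentiable, with L-Lipschitz gradient, A a real m×n matrix of rank m, and b ∈ ℝᵐ. Suppose f*(−Aᵀν) := sup_x (⟪−Aᵀν, x⟫ − f(x)) is finite for all ν, set g(ν) = −⟪ν, b⟫ − f*(−Aᵀν) and h = −g, and assume h is differentiable, attains its minimum at ν* (the maximizer of g), and satisfies the Polyak–Łojasiewicz inequality ½‖∇h(ν)‖² ≥ μ (h(ν) − h(ν*)) for all ν with some μ > 0. Fix c₁, c₂ > 0, p₁ > 2, 1 < p₂ < 2, α₁ = 2 − (p₁−2)/(p₁−1), α₂ = 2 − (p₂−2)/(p₂−1).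 Then every trajectory of ν̇ = −c₁∇h(ν)/‖∇h(ν)‖^{(p₁−2)/(p₁−1)} − c₂∇h(ν)/‖∇h(ν)‖^{(p₂−2)/(p₂−1)} (right-hand side 0 when ∇h = 0) satisfies g(ν(t)) = g(ν*) for all t ≥ T_ν := 4/(c₁(2μ)^{α₁/2}(2−α₁)) + 4/(c₂(2μ)^{α₂/2}(α₂−2)), for every initial condition ν(0). -/
open scoped RealInnerProductSpace Classical
open Matrix

/-- Comparison lemma: if `φ' ≤ -K` on `[s,e]`, then `φ e ≤ φ s - K (e - s)`. -/
private lemma decay_aux {s e K : ℝ} (hse : s ≤ e) (φ φ' : ℝ → ℝ)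
    (hd : ∀ u ∈ Set.Icc s e, HasDerivAt φ (φ' u) u)
    (hb : ∀ u ∈ Set.Icc s e, φ' u ≤ -K) : φ e ≤ φ s - K * (e - s) := by
  have hψd : ∀ u ∈ Set.Icc s e, HasDerivAt (fun r => φ r + K * r) (φ' u + K) u := by
    intro u hu
    exact ((hd u hu).add ((hasDerivAt_id u).const_mul K)).congr_deriv (by simp)
  have hmono : AntitoneOn (fun r => φ r + K * r) (Set.Icc s e) := by
    apply antitoneOn_of_deriv_nonpos (convex_Icc s e)
    · intro u hu
      exact (hψd u hu).continuousAt.continuousWithinAt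
    · intro u hu
      rw [interior_Icc] at hu
      exact (hψd u (Set.Ioo_subset_Icc_self hu)).differentiableAt.differentiableWithinAt
    · intro u hu
      rw [interior_Icc] at hu
      rw [(hψd u (Set.Ioo_subset_Icc_self hu)).deriv]
      linarith [hb u (Set.Ioo_subset_Icc_self hu)]
  have := hmono (Set.left_mem_Icc.2 hse) (Set.right_mem_Icc.2 hse) hse
  simp only at this
  linarith

private lemma prod_aux (k β : ℝ) (hk : k ≠ 0) (hβ : β ≠ 0) :
    β / 2 * k * (4 / (k * β)) = 2 := by
  field_simp
  ring

set_option maxHeartbeats 1000000 in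
/-- Fixed-time convergence of the rescaled gradient flow on the (negated) dual function
`h = −g`, `g(ν) = −⟪ν, b⟫ − f*(−Aᵀν)`: every trajectory attains the dual optimal value
`g(ν*)` within the fixed time `T_ν = 4/(c₁(2μ)^{α₁/2}(2−α₁)) + 4/(c₂(2μ)^{α₂/2}(α₂−2))`. -/
theorem fixed_time_dual_ascent
    {n m : ℕ} (f : EuclideanSpace ℝ (Fin n) → ℝ)
    (hconv : ConvexOn ℝ Set.univ f) (hdiff : Differentiable ℝ f)
    (L : NNReal) (hL : 0 < L) (hlip : LipschitzWith L (gradient f))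
    (A : Matrix (Fin m) (Fin n) ℝ) (hA : A.rank = m) (b : EuclideanSpace ℝ (Fin m))
    (hbdd : ∀ ν : EuclideanSpace ℝ (Fin m),
      BddAbove (Set.range fun x : EuclideanSpace ℝ (Fin n) =>
        ⟪-(Matrix.toEuclideanLin Aᵀ ν), x⟫ - f x))
    (g h : EuclideanSpace ℝ (Fin m) → ℝ)
    (hg : g = fun ν => -⟪ν, b⟫ - sSup (Set.range fun x : EuclideanSpace ℝ (Fin n) =>
        ⟪-(Matrix.toEuclideanLin Aᵀ ν), x⟫ - f x))
    (hh : h = -g) (hhdiff : Differentiable ℝ h)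
    (νstar : EuclideanSpace ℝ (Fin m)) (hνstar : ∀ ν, h νstar ≤ h ν)
    (μ : ℝ) (hμ : 0 < μ)
    (hPL : ∀ ν : EuclideanSpace ℝ (Fin m),
      μ * (h ν - h νstar) ≤ (1 / 2) * ‖gradient h ν‖ ^ 2)
    (c₁ c₂ p₁ p₂ : ℝ) (hc₁ : 0 < c₁) (hc₂ : 0 < c₂)
    (hp₁ : 2 < p₁) (hp₂ : 1 < p₂) (hp₂' : p₂ < 2)
    (α₁ α₂ : ℝ) (hα₁ : α₁ = 2 - (p₁ - 2) / (p₁ - 1)) (hα₂ : α₂ = 2 - (p₂ - 2) / (p₂ - 1))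
    (ν : ℝ → EuclideanSpace ℝ (Fin m))
    (hν : ∀ t : ℝ, 0 ≤ t → HasDerivAt ν
      (if gradient h (ν t) = 0 then 0
       else -((c₁ / ‖gradient h (ν t)‖ ^ ((p₁ - 2) / (p₁ - 1))) • gradient h (ν t))
            - (c₂ / ‖gradient h (ν t)‖ ^ ((p₂ - 2) / (p₂ - 1))) • gradient h (ν t)) t) :
    ∀ t : ℝ,
      4 / (c₁ * (2 * μ) ^ (α₁ / 2) * (2 - α₁)) + 4 / (c₂ * (2 * μ) ^ (α₂ / 2) * (α₂ - 2)) ≤ t →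
      g (ν t) = g νstar := by
  -- numeric facts about exponents
  have hq₁pos : 0 < (p₁ - 2) / (p₁ - 1) := div_pos (by linarith) (by linarith)
  have hq₁lt : (p₁ - 2) / (p₁ - 1) < 1 := (div_lt_one (by linarith)).2 (by linarith)
  have hα₁gt : 1 < α₁ := by rw [hα₁]; linarith
  have hα₁lt : α₁ < 2 := by rw [hα₁]; linarith
  have hq₂neg : (p₂ - 2) / (p₂ - 1) < 0 := div_neg_of_neg_of_pos (by linarith) (by linarith)
  have hα₂gt : 2 < α₂ := by rw [hα₂]; linarith
  have h2μ : (0:ℝ) < 2 * μ := by linarith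
  set k₁ : ℝ := c₁ * (2 * μ) ^ (α₁ / 2) with hk₁def
  set k₂ : ℝ := c₂ * (2 * μ) ^ (α₂ / 2) with hk₂def
  have hk₁ : 0 < k₁ := mul_pos hc₁ (Real.rpow_pos_of_pos h2μ _)
  have hk₂ : 0 < k₂ := mul_pos hc₂ (Real.rpow_pos_of_pos h2μ _)
  set T₁ : ℝ := 4 / (k₁ * (2 - α₁)) with hT₁def
  set T₂ : ℝ := 4 / (k₂ * (α₂ - 2)) with hT₂def
  have hT₁pos : 0 < T₁ := div_pos (by norm_num) (mul_pos hk₁ (by linarith))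
  have hT₂pos : 0 < T₂ := div_pos (by norm_num) (mul_pos hk₂ (by linarith))
  -- the Lyapunov function and its derivative
  set G : ℝ → EuclideanSpace ℝ (Fin m) := fun t => gradient h (ν t) with hGdef
  set F : ℝ → EuclideanSpace ℝ (Fin m) := fun t =>
    if G t = 0 then 0
    else -((c₁ / ‖G t‖ ^ ((p₁ - 2) / (p₁ - 1))) • G t)
         - (c₂ / ‖G t‖ ^ ((p₂ - 2) / (p₂ - 1))) • G t with hFdef
  set V : ℝ → ℝ := fun t => h (ν t) - h νstar with hVdef
  set Vd : ℝ → ℝ := fun t => ⟪G t, F t⟫ with hVddef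
  have hVnn : ∀ t, 0 ≤ V t := fun t => sub_nonneg.2 (hνstar _)
  have hVder : ∀ t, 0 ≤ t → HasDerivAt V (Vd t) t := by
    intro t ht
    have h1 : HasFDerivAt h (InnerProductSpace.toDual ℝ _ (G t)) (ν t) :=
      ((hhdiff (ν t)).hasGradientAt).hasFDerivAt
    have h2 := h1.comp_hasDerivAt t (hν t ht)
    have h3 : HasDerivAt (fun s => h (ν s)) (⟪G t, F t⟫) t := by
      exact h2
    simpa [hVdef, hVddef] using h3.sub_const (h νstar)
  -- explicit value of the derivative when the gradient is nonzero
  have hVd_eq : ∀ t, G t ≠ 0 → Vd t = -(c₁ * ‖G t‖ ^ α₁ + c₂ * ‖G t‖ ^ α₂) := by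
    intro t hGt
    have hn : 0 < ‖G t‖ := norm_pos_iff.2 hGt
    have hGG : ⟪G t, G t⟫ = ‖G t‖ ^ (2:ℝ) := by
      rw [real_inner_self_eq_norm_sq, ← Real.rpow_natCast ‖G t‖ 2]
      norm_num
    have key : ∀ c q : ℝ, c / ‖G t‖ ^ q * ‖G t‖ ^ (2:ℝ) = c * ‖G t‖ ^ (2 - q) := by
      intro c q
      rw [Real.rpow_sub hn]
      ring
    have : Vd t = -(c₁ / ‖G t‖ ^ ((p₁ - 2) / (p₁ - 1)) * ⟪G t, G t⟫)
        - c₂ / ‖G t‖ ^ ((p₂ - 2) / (p₂ - 1)) * ⟪G t, G t⟫ := by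
      simp only [hVddef, hFdef, if_neg hGt, inner_sub_right, inner_neg_right,
        real_inner_smul_right]
    rw [this, hGG, key, key, ← hα₁, ← hα₂]
    ring
  -- derivative bound via the PL inequality
  have hVd_le : ∀ t, 0 < V t →
      Vd t ≤ -(k₁ * V t ^ (α₁ / 2) + k₂ * V t ^ (α₂ / 2)) := by
    intro t hVt
    have hPLt : 2 * μ * V t ≤ ‖G t‖ ^ (2:ℕ) := by
      have := hPL (ν t)
      simp only [hVdef, hGdef] at *
      linarith
    have hGt : G t ≠ 0 := by
      intro h0
      rw [h0] at hPLt
      simp at hPLt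
      nlinarith
    have hn : 0 < ‖G t‖ := norm_pos_iff.2 hGt
    have hbase : 0 ≤ 2 * μ * V t := by positivity
    have hroot : (2 * μ * V t) ^ ((1:ℝ)/2) ≤ ‖G t‖ := by
      have h1 : ((2 * μ * V t) : ℝ) ^ ((1:ℝ)/2) ≤ (‖G t‖ ^ (2:ℕ) : ℝ) ^ ((1:ℝ)/2) :=
        Real.rpow_le_rpow hbase hPLt (by norm_num)
      calc (2 * μ * V t) ^ ((1:ℝ)/2) ≤ (‖G t‖ ^ (2:ℕ)) ^ ((1:ℝ)/2) := h1
        _ = ‖G t‖ := by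
            rw [← Real.rpow_natCast ‖G t‖ 2, ← Real.rpow_mul (norm_nonneg _)]
            norm_num
    have hpow : ∀ α : ℝ, 0 < α → (2*μ) ^ (α/2) * V t ^ (α/2) ≤ ‖G t‖ ^ α := by
      intro α hα
      have h1 : ((2 * μ * V t) ^ ((1:ℝ)/2)) ^ α ≤ ‖G t‖ ^ α :=
        Real.rpow_le_rpow (Real.rpow_nonneg hbase _) hroot (le_of_lt hα)
      have h2 : ((2 * μ * V t) ^ ((1:ℝ)/2)) ^ α = (2 * μ * V t) ^ (α/2) := by
        rw [← Real.rpow_mul hbase]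
        norm_num
        ring_nf
      have h3 : (2 * μ * V t) ^ (α/2) = (2*μ) ^ (α/2) * V t ^ (α/2) :=
        Real.mul_rpow (le_of_lt h2μ) (le_of_lt hVt)
      rw [h2, h3] at h1
      exact h1
    have hb₁ := hpow α₁ (by linarith)
    have hb₂ := hpow α₂ (by linarith)
    have hm₁ : k₁ * V t ^ (α₁/2) ≤ c₁ * ‖G t‖ ^ α₁ := by
      rw [hk₁def, mul_assoc]
      exact mul_le_mul_of_nonneg_left hb₁ (le_of_lt hc₁)
    have hm₂ : k₂ * V t ^ (α₂/2) ≤ c₂ * ‖G t‖ ^ α₂ := by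
      rw [hk₂def, mul_assoc]
      exact mul_le_mul_of_nonneg_left hb₂ (le_of_lt hc₂)
    rw [hVd_eq t hGt]
    linarith
  -- the derivative is always nonpositive
  have hVd_np : ∀ t, Vd t ≤ 0 := by
    intro t
    by_cases hGt : G t = 0
    · simp [hVddef, hFdef, if_pos hGt]
    · rw [hVd_eq t hGt]
      have h1 : 0 ≤ c₁ * ‖G t‖ ^ α₁ := by positivity
      have h2 : 0 ≤ c₂ * ‖G t‖ ^ α₂ := by positivity
      linarith
  -- V is nonincreasing on [0, ∞)
  have hanti : ∀ s e : ℝ, 0 ≤ s → s ≤ e → V e ≤ V s := by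
    intro s e hs hse
    have := decay_aux (K := 0) hse V Vd (fun u hu => hVder u (le_trans hs hu.1))
      (fun u _ => by rw [neg_zero]; exact hVd_np u)
    linarith
  -- main argument
  intro t ht
  have key : h (ν t) = h νstar → g (ν t) = g νstar := by
    intro he
    have hgh : ∀ x, g x = -h x := by intro x; rw [hh]; simp
    rw [hgh, hgh, he]
  apply key
  by_contra hne
  have hVtne : V t ≠ 0 := by
    intro h0
    exact hne (by rw [hVdef] at h0; simp only at h0; linarith)
  have hpos : 0 < V t := lt_of_le_of_ne (hVnn t) (Ne.symm hVtne)
  have hT₂t : T₂ ≤ t := by linarith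
  have hVpos_on : ∀ s, 0 ≤ s → s ≤ t → 0 < V s :=
    fun s hs hst => lt_of_lt_of_le hpos (hanti s t hs hst)
  -- Phase 1: V drops below 1 by time T₂
  have claimA : V T₂ ≤ 1 := by
    by_contra hA
    push_neg at hA
    have hVgt : ∀ s, s ∈ Set.Icc 0 T₂ → 1 < V s :=
      fun s hs => lt_of_lt_of_le hA (hanti s T₂ hs.1 hs.2)
    set bb : ℝ := α₂ / 2 with hbb
    have hb1 : 1 < bb := by rw [hbb]; linarith
    have hder : ∀ s ∈ Set.Icc (0:ℝ) T₂, HasDerivAt (fun r => -(V r ^ (1 - bb)))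
        (-(Vd s * (1 - bb) * V s ^ (1 - bb - 1))) s := by
      intro s hs
      exact ((hVder s hs.1).rpow_const (Or.inl (by linarith [hVgt s hs]))).neg
    have hbnd : ∀ s ∈ Set.Icc (0:ℝ) T₂,
        -(Vd s * (1 - bb) * V s ^ (1 - bb - 1)) ≤ -((bb - 1) * k₂) := by
      intro s hs
      have hVs : 0 < V s := by linarith [hVgt s hs]
      have h1 := hVd_le s hVs
      have h2 : k₂ * V s ^ bb ≤ -Vd s := by
        have h3 : 0 ≤ k₁ * V s ^ (α₁/2) := by positivity
        rw [hbb]; linarith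
      have hee : (1:ℝ) - bb - 1 = -bb := by ring
      rw [hee]
      have e1 : V s ^ bb * V s ^ (-bb) = 1 := by
        rw [← Real.rpow_add hVs]; simp
      have hmul : ((bb - 1) * (k₂ * V s ^ bb)) * V s ^ (-bb)
          ≤ ((bb - 1) * (-Vd s)) * V s ^ (-bb) :=
        mul_le_mul_of_nonneg_right
          (mul_le_mul_of_nonneg_left h2 (by linarith))
          (Real.rpow_nonneg (le_of_lt hVs) _)
      have hcalc : (bb - 1) * k₂ ≤ Vd s * (1 - bb) * V s ^ (-bb) := by
        calc (bb - 1) * k₂ = (bb - 1) * k₂ * (V s ^ bb * V s ^ (-bb)) := by rw [e1]; ring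
          _ = ((bb - 1) * (k₂ * V s ^ bb)) * V s ^ (-bb) := by ring
          _ ≤ ((bb - 1) * (-Vd s)) * V s ^ (-bb) := hmul
          _ = Vd s * (1 - bb) * V s ^ (-bb) := by ring
      linarith
    have := decay_aux (le_of_lt hT₂pos) _ _ hder hbnd
    have hu0 : 0 < V 0 ^ (1 - bb) :=
      Real.rpow_pos_of_pos (by linarith [hVgt 0 (Set.mem_Icc.2 ⟨le_refl 0, le_of_lt hT₂pos⟩)]) _
    have hprod : (bb - 1) * k₂ * T₂ = 2 := by
      have hbb1 : bb - 1 = (α₂ - 2) / 2 := by rw [hbb]; ring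
      rw [hbb1, hT₂def]
      exact prod_aux k₂ (α₂ - 2) (ne_of_gt hk₂) (by linarith)
    have huT : V T₂ ^ (1 - bb) < 1 :=
      Real.rpow_lt_one_of_one_lt_of_neg hA (by linarith)
    -- this : -(V T₂ ^ (1-bb)) ≤ -(V 0 ^ (1-bb)) - (bb-1)*k₂*(T₂ - 0)
    have hfin : V 0 ^ (1 - bb) + (bb - 1) * k₂ * T₂ ≤ V T₂ ^ (1 - bb) := by linarith
    rw [hprod] at hfin
    linarith
  -- Phase 2: V reaches 0 by time T₂ + T₁ ≤ t
  have hT₂nn : 0 ≤ T₂ := le_of_lt hT₂pos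
  set aa : ℝ := α₁ / 2 with haa
  have ha1 : aa < 1 := by rw [haa]; linarith
  have ha0 : 0 < aa := by rw [haa]; linarith
  have hVposB : ∀ s, s ∈ Set.Icc T₂ t → 0 < V s :=
    fun s hs => hVpos_on s (le_trans hT₂nn hs.1) hs.2
  have hVleB : ∀ s, s ∈ Set.Icc T₂ t → V s ≤ 1 :=
    fun s hs => le_trans (hanti T₂ s hT₂nn hs.1) claimA
  have hder : ∀ s ∈ Set.Icc T₂ t, HasDerivAt (fun r => V r ^ (1 - aa))
      (Vd s * (1 - aa) * V s ^ (1 - aa - 1)) s := by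
    intro s hs
    exact (hVder s (le_trans hT₂nn hs.1)).rpow_const (Or.inl (ne_of_gt (hVposB s hs)))
  have hbnd : ∀ s ∈ Set.Icc T₂ t,
      Vd s * (1 - aa) * V s ^ (1 - aa - 1) ≤ -((1 - aa) * k₁) := by
    intro s hs
    have hVs : 0 < V s := hVposB s hs
    have h1 := hVd_le s hVs
    have h2 : Vd s ≤ -(k₁ * V s ^ aa) := by
      have h3 : 0 ≤ k₂ * V s ^ (α₂/2) := by positivity
      rw [haa]; linarith
    have hee : (1:ℝ) - aa - 1 = -aa := by ring
    rw [hee]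
    have e1 : V s ^ aa * V s ^ (-aa) = 1 := by
      rw [← Real.rpow_add hVs]; simp
    calc Vd s * (1 - aa) * V s ^ (-aa)
        ≤ (-(k₁ * V s ^ aa)) * (1 - aa) * V s ^ (-aa) := by
          apply mul_le_mul_of_nonneg_right _ (Real.rpow_nonneg (le_of_lt hVs) _)
          exact mul_le_mul_of_nonneg_right h2 (by linarith)
      _ = -((1 - aa) * k₁ * (V s ^ aa * V s ^ (-aa))) := by ring
      _ = -((1 - aa) * k₁) := by rw [e1]; ring
  have hmain := decay_aux hT₂t _ _ hder hbnd
  have hwT₂ : V T₂ ^ (1 - aa) ≤ 1 :=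
    Real.rpow_le_one (hVnn T₂) claimA (by linarith)
  have hprod : (1 - aa) * k₁ * T₁ = 2 := by
    have haa1 : 1 - aa = (2 - α₁) / 2 := by rw [haa]; ring
    rw [haa1, hT₁def]
    exact prod_aux k₁ (2 - α₁) (ne_of_gt hk₁) (by linarith)
  have htT : T₁ ≤ t - T₂ := by linarith
  have hstep : (1 - aa) * k₁ * T₁ ≤ (1 - aa) * k₁ * (t - T₂) :=
    mul_le_mul_of_nonneg_left htT (mul_nonneg (by linarith) (le_of_lt hk₁))
  have hwt : 0 < V t ^ (1 - aa) := Real.rpow_pos_of_pos hpos _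
  rw [hprod] at hstep
  linarith
end

section
/- Consider minimizing f(x) subject to Ax = b, where f is twice continuously differentiable with ⟪v, ∇²f(x) v⟫ ≥ k‖v‖² for all x, v (k > 0), A is a real m×n matrix of full row rank, and the problem is feasible with unique optimizer x*. Let ν* ∈ ℝᵐ satisfy the stationarity condition ∇f(x*) + Aᵀν* = 0, and define L(x) = f(x) + ⟪ν*, Ax − b⟫, so ∇L(x) = ∇f(x) + Aᵀν*. Fix d₁, d₂ > 0, q₁ > 2, 1 < q₂ < 2, and set a₁ = 2 − (q₁−2)/(q₁−1), a₂ = 2 − (q₂−2)/(q₂−1). Then every trajectory of ẋ = −d₁∇L(x)/‖∇L(x)‖^{(q₁−2)/(q₁−1)} − d₂∇L(x)/‖∇L(x)‖^{(q₂−2)/(q₂−1)} (right-hand side 0 when ∇L = 0) satisfies x(t) = x* for all t ≥ T_x := 2^{1−a₁/2}/(d₁ k (2−a₁)) + 2^{1−a₂/2}/(d₂ k (a₂−2)), for every initial condition x(0). -/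
open scoped RealInnerProductSpace Classical
open Matrix Set

section FTAux

lemma aux_le_of_deriv_le (u u' : ℝ → ℝ) (c t0 t1 : ℝ) (h01 : t0 ≤ t1)
    (hu : ∀ t ∈ Icc t0 t1, HasDerivAt u (u' t) t)
    (hc : ∀ t ∈ Icc t0 t1, u' t ≤ c) :
    u t1 ≤ u t0 + c * (t1 - t0) := by
  have hmono : MonotoneOn (fun t => c * t - u t) (Icc t0 t1) := by
    have hd : ∀ t ∈ Icc t0 t1, HasDerivAt (fun t => c * t - u t) (c - u' t) t := by
      intro t ht
      simpa using ((hasDerivAt_id t).const_mul c).fun_sub (hu t ht)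
    apply monotoneOn_of_deriv_nonneg (convex_Icc t0 t1)
    · exact fun t ht => (hd t ht).continuousAt.continuousWithinAt
    · intro t ht
      rw [interior_Icc] at ht
      exact (hd t (Ioo_subset_Icc_self ht)).differentiableAt.differentiableWithinAt
    · intro t ht
      rw [interior_Icc] at ht
      rw [(hd t (Ioo_subset_Icc_self ht)).deriv]
      have := hc t (Ioo_subset_Icc_self ht)
      linarith
  have := hmono (left_mem_Icc.mpr h01) (right_mem_Icc.mpr h01) h01
  simp only at this
  linarith

lemma aux_ge_of_deriv_ge (u u' : ℝ → ℝ) (c t0 t1 : ℝ) (h01 : t0 ≤ t1)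
    (hu : ∀ t ∈ Icc t0 t1, HasDerivAt u (u' t) t)
    (hc : ∀ t ∈ Icc t0 t1, c ≤ u' t) :
    u t0 + c * (t1 - t0) ≤ u t1 := by
  have := aux_le_of_deriv_le (fun t => -u t) (fun t => -u' t) (-c) t0 t1 h01
    (fun t ht => (hu t ht).neg) (fun t ht => by simpa using hc t ht)
  linarith

lemma aux_antitone_s9 (u u' : ℝ → ℝ)
    (hu : ∀ t ∈ Ici (0:ℝ), HasDerivAt u (u' t) t)
    (h : ∀ t ∈ Ici (0:ℝ), u' t ≤ 0) :
    AntitoneOn u (Ici (0:ℝ)) := by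
  apply antitoneOn_of_deriv_nonpos (convex_Ici 0)
  · exact fun t ht => (hu t ht).continuousAt.continuousWithinAt
  · intro t ht
    rw [interior_Ici] at ht
    exact (hu t (Ioi_subset_Ici_self ht)).differentiableAt.differentiableWithinAt
  · intro t ht
    rw [interior_Ici] at ht
    rw [(hu t (Ioi_subset_Ici_self ht)).deriv]
    exact h t (Ioi_subset_Ici_self ht)

/-- Phase with exponent `γ > 1`: reach level `M` within the prescribed time. -/
lemma aux_reach_level (u u' : ℝ → ℝ) (c γ M t0 t1 : ℝ)
    (hM : 0 < M) (hc : 0 < c) (hγ : 1 < γ) (h01 : t0 ≤ t1)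
    (hu : ∀ t ∈ Icc t0 t1, HasDerivAt u (u' t) t)
    (hb : ∀ t ∈ Icc t0 t1, M < u t → u' t ≤ -c * u t ^ γ)
    (ht : M ^ (1 - γ) / (c * (γ - 1)) ≤ t1 - t0) :
    ∃ t ∈ Icc t0 t1, u t ≤ M := by
  by_contra hcon
  push_neg at hcon
  have hupos : ∀ t ∈ Icc t0 t1, M < u t := hcon
  set w : ℝ → ℝ := fun t => u t ^ (1 - γ) with hw
  have hwd : ∀ t ∈ Icc t0 t1, HasDerivAt w (u' t * (1 - γ) * u t ^ (1 - γ - 1)) t := by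
    intro t htt
    have hut : 0 < u t := lt_trans hM (hupos t htt)
    exact (hu t htt).rpow_const (Or.inl (ne_of_gt hut))
  have hwge : ∀ t ∈ Icc t0 t1, c * (γ - 1) ≤ u' t * (1 - γ) * u t ^ (1 - γ - 1) := by
    intro t htt
    have hut : 0 < u t := lt_trans hM (hupos t htt)
    have h1 : u' t ≤ -c * u t ^ γ := hb t htt (hupos t htt)
    have h2 : (0:ℝ) < u t ^ (1 - γ - 1) := Real.rpow_pos_of_pos hut _
    have h3 : u t ^ γ * u t ^ (1 - γ - 1) = 1 := by
      rw [← Real.rpow_add hut]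
      norm_num
    have h5 : c * u t ^ γ * ((γ - 1) * u t ^ (1 - γ - 1))
        ≤ (-(u' t)) * ((γ - 1) * u t ^ (1 - γ - 1)) := by
      exact mul_le_mul_of_nonneg_right (by linarith) (mul_nonneg (by linarith) h2.le)
    calc c * (γ - 1) = c * u t ^ γ * ((γ - 1) * u t ^ (1 - γ - 1)) := by
          rw [mul_comm (γ - 1), ← mul_assoc, mul_assoc _ (u t ^ γ), h3]; ring
      _ ≤ (-(u' t)) * ((γ - 1) * u t ^ (1 - γ - 1)) := h5
      _ = u' t * (1 - γ) * u t ^ (1 - γ - 1) := by ring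
  have hkey := aux_ge_of_deriv_ge w (fun t => u' t * (1 - γ) * u t ^ (1 - γ - 1))
    (c * (γ - 1)) t0 t1 h01 hwd hwge
  have hw0 : 0 ≤ w t0 :=
    Real.rpow_nonneg (le_of_lt (lt_trans hM (hupos t0 (left_mem_Icc.mpr h01)))) _
  have hcg : 0 < c * (γ - 1) := mul_pos hc (by linarith)
  have hM1 : M ^ (1 - γ) ≤ c * (γ - 1) * (t1 - t0) := by
    calc M ^ (1 - γ) = c * (γ - 1) * (M ^ (1 - γ) / (c * (γ - 1))) := by field_simp; rw [div_self (sub_pos.mpr hγ).ne']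
      _ ≤ c * (γ - 1) * (t1 - t0) := by
          apply mul_le_mul_of_nonneg_left ht (le_of_lt hcg)
  have hlt : w t1 < M ^ (1 - γ) :=
    Real.rpow_lt_rpow_of_neg hM (hupos t1 (right_mem_Icc.mpr h01)) (by linarith)
  linarith

/-- Phase with exponent `0 < γ < 1`: hit zero within the prescribed time. -/
lemma aux_hit_zero (u u' : ℝ → ℝ) (c γ B t0 t1 : ℝ)
    (hB : 0 < B) (hc : 0 < c) (hγ0 : 0 < γ) (hγ : γ < 1) (h01 : t0 ≤ t1)
    (hu : ∀ t ∈ Icc t0 t1, HasDerivAt u (u' t) t)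
    (hb : ∀ t ∈ Icc t0 t1, 0 < u t → u' t ≤ -c * u t ^ γ)
    (hinit : u t0 ≤ B)
    (ht : B ^ (1 - γ) / (c * (1 - γ)) ≤ t1 - t0) :
    ∃ t ∈ Icc t0 t1, u t ≤ 0 := by
  by_contra hcon
  push_neg at hcon
  have hupos : ∀ t ∈ Icc t0 t1, 0 < u t := hcon
  set w : ℝ → ℝ := fun t => u t ^ (1 - γ) with hw
  have hwd : ∀ t ∈ Icc t0 t1, HasDerivAt w (u' t * (1 - γ) * u t ^ (1 - γ - 1)) t := by
    intro t htt
    exact (hu t htt).rpow_const (Or.inl (ne_of_gt (hupos t htt)))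
  have hwle : ∀ t ∈ Icc t0 t1, u' t * (1 - γ) * u t ^ (1 - γ - 1) ≤ -(c * (1 - γ)) := by
    intro t htt
    have hut : 0 < u t := hupos t htt
    have h1 : u' t ≤ -c * u t ^ γ := hb t htt hut
    have h2 : (0:ℝ) < u t ^ (1 - γ - 1) := Real.rpow_pos_of_pos hut _
    have h3 : u t ^ γ * u t ^ (1 - γ - 1) = 1 := by
      rw [← Real.rpow_add hut]
      norm_num
    have h5 : u' t * ((1 - γ) * u t ^ (1 - γ - 1))
        ≤ (-c * u t ^ γ) * ((1 - γ) * u t ^ (1 - γ - 1)) := by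
      exact mul_le_mul_of_nonneg_right h1 (mul_nonneg (by linarith) h2.le)
    calc u' t * (1 - γ) * u t ^ (1 - γ - 1)
        = u' t * ((1 - γ) * u t ^ (1 - γ - 1)) := by ring
      _ ≤ (-c * u t ^ γ) * ((1 - γ) * u t ^ (1 - γ - 1)) := h5
      _ = -(c * (1 - γ)) * (u t ^ γ * u t ^ (1 - γ - 1)) := by ring
      _ = -(c * (1 - γ)) := by rw [h3, mul_one]
  have hkey := aux_le_of_deriv_le w (fun t => u' t * (1 - γ) * u t ^ (1 - γ - 1))
    (-(c * (1 - γ))) t0 t1 h01 hwd hwle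
  have hw1 : 0 < w t1 := Real.rpow_pos_of_pos (hupos t1 (right_mem_Icc.mpr h01)) _
  have hw0 : w t0 ≤ B ^ (1 - γ) :=
    Real.rpow_le_rpow (le_of_lt (hupos t0 (left_mem_Icc.mpr h01))) hinit (by linarith)
  have hcg : 0 < c * (1 - γ) := mul_pos hc (by linarith)
  have hM1 : B ^ (1 - γ) ≤ c * (1 - γ) * (t1 - t0) := by
    calc B ^ (1 - γ) = c * (1 - γ) * (B ^ (1 - γ) / (c * (1 - γ))) := by field_simp; rw [div_self (sub_pos.mpr hγ).ne']
      _ ≤ c * (1 - γ) * (t1 - t0) := by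
          apply mul_le_mul_of_nonneg_left ht (le_of_lt hcg)
  linarith

lemma aux_pl (Lz Ls I G D k : ℝ) (hk : 0 < k) (h1 : Lz + I + k / 2 * D ^ 2 ≤ Ls)
    (h2 : -(G * D) ≤ I) : 2 * k * (Lz - Ls) ≤ G ^ 2 := by
  nlinarith [sq_nonneg (G - k * D)]

variable {F : Type*} [NormedAddCommGroup F] [InnerProductSpace ℝ F] [CompleteSpace F]

/-- Quadratic lower bound for a function with gradient and Hessian lower bound. -/
lemma aux_strong_convex (L : F → ℝ) (g : F → F) (H : F → F →L[ℝ] F) (k : ℝ)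
    (hg : ∀ y, HasGradientAt L (g y) y)
    (hH : ∀ y, HasFDerivAt g (H y) y)
    (hconv : ∀ y v, k * ‖v‖ ^ 2 ≤ ⟪v, H y v⟫) :
    ∀ z y : F, L z + ⟪g z, y - z⟫ + k / 2 * ‖y - z‖ ^ 2 ≤ L y := by
  intro z y
  set d := y - z with hd
  have hline : ∀ s : ℝ, HasDerivAt (fun s : ℝ => z + s • d) d s := by
    intro s
    simpa using ((hasDerivAt_id s).smul_const d).const_add z
  have hψ : ∀ s : ℝ, HasDerivAt (fun s : ℝ => ⟪g (z + s • d), d⟫) ⟪d, H (z + s • d) d⟫ s := by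
    intro s
    have h1 : HasDerivAt (fun s : ℝ => g (z + s • d)) (H (z + s • d) d) s :=
      (hH (z + s • d)).comp_hasDerivAt s (hline s)
    have h2 := (h1.inner ℝ (hasDerivAt_const s d))
    simpa [real_inner_comm] using h2
  have hφ : ∀ s : ℝ, HasDerivAt (fun s : ℝ => L (z + s • d)) ⟪g (z + s • d), d⟫ s := by
    intro s
    have h1 : HasFDerivAt L (InnerProductSpace.toDual ℝ F (g (z + s • d))) (z + s • d) :=
      hasGradientAt_iff_hasFDerivAt.mp (hg (z + s • d))
    have h2 := h1.comp_hasDerivAt s (hline s)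
    simpa [InnerProductSpace.toDual_apply_apply, Function.comp_def] using h2
  have hmono : Monotone (fun s : ℝ => ⟪g (z + s • d), d⟫ - k * s * ‖d‖ ^ 2) := by
    have hder : ∀ s : ℝ, HasDerivAt (fun s : ℝ => ⟪g (z + s • d), d⟫ - k * s * ‖d‖ ^ 2)
        (⟪d, H (z + s • d) d⟫ - k * ‖d‖ ^ 2) s := by
      intro s
      have h2 : HasDerivAt (fun s : ℝ => k * s * ‖d‖ ^ 2) (k * ‖d‖ ^ 2) s := by
        simpa using (((hasDerivAt_id s).const_mul k).mul_const (‖d‖ ^ 2))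
      exact (hψ s).sub h2
    apply monotone_of_deriv_nonneg
    · exact fun s => (hder s).differentiableAt
    · intro s
      rw [(hder s).deriv]
      have := hconv (z + s • d) d
      linarith
  have hχ : ∀ s : ℝ, HasDerivAt
      (fun s : ℝ => L (z + s • d) - s * ⟪g z, d⟫ - k / 2 * ‖d‖ ^ 2 * s ^ 2)
      (⟪g (z + s • d), d⟫ - ⟪g z, d⟫ - k * s * ‖d‖ ^ 2) s := by
    intro s
    have h1 : HasDerivAt (fun s : ℝ => s * ⟪g z, d⟫) ⟪g z, d⟫ s := by
      simpa using (hasDerivAt_id s).mul_const ⟪g z, d⟫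
    have h2 : HasDerivAt (fun s : ℝ => k / 2 * ‖d‖ ^ 2 * s ^ 2)
        (k / 2 * ‖d‖ ^ 2 * (2 * s)) s := by
      have := (hasDerivAt_pow 2 s).const_mul (k / 2 * ‖d‖ ^ 2)
      simpa [mul_comm, mul_assoc] using this
    have h3 := ((hφ s).fun_sub h1).fun_sub h2
    exact h3.congr_deriv (by ring)
  have hmono2 : MonotoneOn
      (fun s : ℝ => L (z + s • d) - s * ⟪g z, d⟫ - k / 2 * ‖d‖ ^ 2 * s ^ 2) (Icc 0 1) := by
    apply monotoneOn_of_deriv_nonneg (convex_Icc 0 1)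
    · exact fun s _ => (hχ s).continuousAt.continuousWithinAt
    · exact fun s _ => (hχ s).differentiableAt.differentiableWithinAt
    · intro s hs
      rw [interior_Icc] at hs
      rw [(hχ s).deriv]
      have h4' : ⟪g z, d⟫ - 0 ≤ ⟪g (z + s • d), d⟫ - k * s * ‖d‖ ^ 2 := by
        have := hmono (le_of_lt hs.1 : (0:ℝ) ≤ s)
        simpa using this
      linarith
  have hfin := hmono2 (left_mem_Icc.mpr zero_le_one) (right_mem_Icc.mpr zero_le_one) zero_le_one
  simp only [zero_smul, add_zero, one_smul, zero_mul, mul_zero, sub_zero, one_pow, mul_one] at hfin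
  have hzy : z + d = y := by rw [hd]; abel
  rw [hzy] at hfin
  linarith

end FTAux

set_option maxHeartbeats 2000000 in
/-- Fixed-time convergence to the optimizer of the equality-constrained problem
`min f(x) s.t. Ax = b`: with `ν*` the dual optimal multiplier satisfying
`∇f(x*) + Aᵀν* = 0` and `∇L(x) = ∇f(x) + Aᵀν*`, every trajectory of the two-term rescaled
flow on `L` reaches `x*` within the fixed time
`T_x = 2^{1−a₁/2}/(d₁k(2−a₁)) + 2^{1−a₂/2}/(d₂k(a₂−2))`. -/
theorem fixed_time_equality_constrained
    {n m : ℕ} (f : EuclideanSpace ℝ (Fin n) → ℝ) (hf : ContDiff ℝ 2 f)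
    (k : ℝ) (hk : 0 < k)
    (hconv : ∀ x v : EuclideanSpace ℝ (Fin n),
      k * ‖v‖ ^ 2 ≤ ⟪v, fderiv ℝ (gradient f) x v⟫)
    (A : Matrix (Fin m) (Fin n) ℝ) (hA : A.rank = m) (b : EuclideanSpace ℝ (Fin m))
    (xstar : EuclideanSpace ℝ (Fin n))
    (hfeas : Matrix.toEuclideanLin A xstar = b)
    (hopt : ∀ y : EuclideanSpace ℝ (Fin n), Matrix.toEuclideanLin A y = b → f xstar ≤ f y)
    (huniq : ∀ y : EuclideanSpace ℝ (Fin n),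
      Matrix.toEuclideanLin A y = b → f y = f xstar → y = xstar)
    (νstar : EuclideanSpace ℝ (Fin m))
    (hstat : gradient f xstar + Matrix.toEuclideanLin Aᵀ νstar = 0)
    (gradL : EuclideanSpace ℝ (Fin n) → EuclideanSpace ℝ (Fin n))
    (hgradL : gradL = fun y => gradient f y + Matrix.toEuclideanLin Aᵀ νstar)
    (d₁ d₂ q₁ q₂ : ℝ) (hd₁ : 0 < d₁) (hd₂ : 0 < d₂)
    (hq₁ : 2 < q₁) (hq₂ : 1 < q₂) (hq₂' : q₂ < 2)
    (a₁ a₂ : ℝ) (ha₁ : a₁ = 2 - (q₁ - 2) / (q₁ - 1)) (ha₂ : a₂ = 2 - (q₂ - 2) / (q₂ - 1))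
    (x : ℝ → EuclideanSpace ℝ (Fin n))
    (hx : ∀ t : ℝ, 0 ≤ t → HasDerivAt x
      (if gradL (x t) = 0 then 0
       else -((d₁ / ‖gradL (x t)‖ ^ ((q₁ - 2) / (q₁ - 1))) • gradL (x t))
            - (d₂ / ‖gradL (x t)‖ ^ ((q₂ - 2) / (q₂ - 1))) • gradL (x t)) t) :
    ∀ t : ℝ,
      2 ^ (1 - a₁ / 2) / (d₁ * k * (2 - a₁)) + 2 ^ (1 - a₂ / 2) / (d₂ * k * (a₂ - 2)) ≤ t →
      x t = xstar := by
  classical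
  set c : EuclideanSpace ℝ (Fin n) := Matrix.toEuclideanLin Aᵀ νstar with hc
  set Lf : EuclideanSpace ℝ (Fin n) → ℝ := fun y => f y + ⟪c, y⟫ with hLf
  -- exponents
  set p₁ : ℝ := (q₁ - 2) / (q₁ - 1) with hp₁def
  set p₂ : ℝ := (q₂ - 2) / (q₂ - 1) with hp₂def
  have hp₁pos : 0 < p₁ := div_pos (by linarith) (by linarith)
  have hp₁lt : p₁ < 1 := by
    rw [hp₁def, div_lt_one (by linarith)]
    linarith
  have hp₂neg : p₂ < 0 := div_neg_of_neg_of_pos (by linarith) (by linarith)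
  have ha₁p : a₁ = 2 - p₁ := ha₁
  have ha₂p : a₂ = 2 - p₂ := ha₂
  have ha₁1 : 1 < a₁ := by rw [ha₁p]; linarith
  have ha₁2 : a₁ < 2 := by rw [ha₁p]; linarith
  have ha₂2 : 2 < a₂ := by rw [ha₂p]; linarith
  -- differentiability facts
  have hf1 : Differentiable ℝ f := hf.differentiable (by norm_num)
  have hgradc : ContDiff ℝ 1 (gradient f) := by
    have h2 : ContDiff ℝ 1 (fderiv ℝ f) := hf.fderiv_right (by norm_num)
    have heq : gradient f =
        (fun L : EuclideanSpace ℝ (Fin n) →L[ℝ] ℝ => (InnerProductSpace.toDual ℝ (EuclideanSpace ℝ (Fin n))).symm L) ∘ (fderiv ℝ f) := rfl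
    rw [heq]
    exact ((InnerProductSpace.toDual ℝ (EuclideanSpace ℝ (Fin n))).symm.contDiff).comp h2
  have hgrad_diff : ∀ y : EuclideanSpace ℝ (Fin n), DifferentiableAt ℝ (gradient f) y :=
    fun y => (hgradc.differentiable one_ne_zero).differentiableAt
  have hH : ∀ y : EuclideanSpace ℝ (Fin n), HasFDerivAt gradL (fderiv ℝ (gradient f) y) y := by
    intro y
    rw [hgradL]
    exact ((hgrad_diff y).hasFDerivAt).add_const c
  have hgLf : ∀ y : EuclideanSpace ℝ (Fin n), HasGradientAt Lf (gradL y) y := by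
    intro y
    have h1 : HasFDerivAt f (InnerProductSpace.toDual ℝ (EuclideanSpace ℝ (Fin n)) (gradient f y)) y :=
      hasGradientAt_iff_hasFDerivAt.mp (hf1 y).hasGradientAt
    have h2 : HasFDerivAt (fun y : EuclideanSpace ℝ (Fin n) => ⟪c, y⟫) (InnerProductSpace.toDual ℝ (EuclideanSpace ℝ (Fin n)) c) y := by
      have h3 := (InnerProductSpace.toDual ℝ (EuclideanSpace ℝ (Fin n)) c).hasFDerivAt (x := y)
      have h4 : (fun y : EuclideanSpace ℝ (Fin n) => ⟪c, y⟫) = ⇑(InnerProductSpace.toDual ℝ (EuclideanSpace ℝ (Fin n)) c) := by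
        funext w
        rw [InnerProductSpace.toDual_apply_apply]
      rw [h4]
      exact h3
    have h5 := h1.fun_add h2
    rw [hasGradientAt_iff_hasFDerivAt, hgradL]
    simpa [map_add] using h5
  have key := aux_strong_convex Lf gradL (fun y => fderiv ℝ (gradient f) y) k hgLf hH hconv
  have gstar : gradL xstar = 0 := by rw [hgradL]; exact hstat
  have lower : ∀ y : EuclideanSpace ℝ (Fin n), k / 2 * ‖y - xstar‖ ^ 2 ≤ Lf y - Lf xstar := by
    intro y
    have h1 := key xstar y
    rw [gstar] at h1
    simp only [inner_zero_left] at h1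
    linarith
  have PL : ∀ z : EuclideanSpace ℝ (Fin n), 2 * k * (Lf z - Lf xstar) ≤ ‖gradL z‖ ^ 2 := by
    intro z
    have h1 := key z xstar
    have h2 : -(‖gradL z‖ * ‖xstar - z‖) ≤ ⟪gradL z, xstar - z⟫ := by
      have h3 := abs_real_inner_le_norm (gradL z) (xstar - z)
      have := neg_abs_le ⟪gradL z, xstar - z⟫
      linarith
    exact aux_pl _ _ _ _ _ k hk h1 h2
  set u : ℝ → ℝ := fun t => Lf (x t) - Lf xstar with hu
  have hu_nonneg : ∀ t : ℝ, 0 ≤ u t := by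
    intro t
    have := lower (x t)
    have h0 : 0 ≤ k / 2 * ‖x t - xstar‖ ^ 2 := by positivity
    simpa [hu] using le_trans h0 this
  set X : ℝ → EuclideanSpace ℝ (Fin n) := fun t =>
    (if gradL (x t) = 0 then 0
     else -((d₁ / ‖gradL (x t)‖ ^ p₁) • gradL (x t))
          - (d₂ / ‖gradL (x t)‖ ^ p₂) • gradL (x t)) with hX
  set v : ℝ → ℝ := fun t => ⟪gradL (x t), X t⟫ with hv
  have hud : ∀ t ∈ Ici (0:ℝ), HasDerivAt u (v t) t := by
    intro t ht
    have h1 : HasFDerivAt Lf (InnerProductSpace.toDual ℝ (EuclideanSpace ℝ (Fin n)) (gradL (x t))) (x t) :=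
      hasGradientAt_iff_hasFDerivAt.mp (hgLf (x t))
    have h2 := (h1.comp_hasDerivAt t (hx t ht)).sub_const (Lf xstar)
    simpa [hu, hv, hX, InnerProductSpace.toDual_apply_apply] using h2
  set c₁ : ℝ := d₁ * (2 * k) ^ (a₁ / 2) with hc₁
  set c₂ : ℝ := d₂ * (2 * k) ^ (a₂ / 2) with hc₂
  have hc₁pos : 0 < c₁ := by
    apply mul_pos hd₁
    exact Real.rpow_pos_of_pos (by linarith) _
  have hc₂pos : 0 < c₂ := by
    apply mul_pos hd₂
    exact Real.rpow_pos_of_pos (by linarith) _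
  have hbound : ∀ t ∈ Ici (0:ℝ),
      v t ≤ -c₁ * u t ^ (a₁ / 2) - c₂ * u t ^ (a₂ / 2) := by
    intro t _
    by_cases hg0 : gradL (x t) = 0
    · have h1 : 2 * k * u t ≤ ‖gradL (x t)‖ ^ 2 := PL (x t)
      rw [hg0] at h1
      simp only [norm_zero] at h1
      have h2 := hu_nonneg t
      have h3 : 0 ≤ 2 * k * u t := mul_nonneg (by linarith) h2
      have h4 : 2 * k * u t = 0 := le_antisymm (by linarith) h3
      have hu0 : u t = 0 := by
        rcases mul_eq_zero.mp h4 with h5 | h5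
        · linarith
        · exact h5
      have hX0 : X t = 0 := by simp only [hX]; rw [if_pos hg0]
      have hv0 : v t = 0 := by simp only [hv]; rw [hX0, inner_zero_right]
      rw [hv0, hu0, Real.zero_rpow (by positivity : a₁ / 2 ≠ 0),
        Real.zero_rpow (by positivity : a₂ / 2 ≠ 0)]
      simp
    · have hr : 0 < ‖gradL (x t)‖ := norm_pos_iff.mpr hg0
      have hXval : X t = -((d₁ / ‖gradL (x t)‖ ^ p₁) • gradL (x t))
          - (d₂ / ‖gradL (x t)‖ ^ p₂) • gradL (x t) := by
        simp only [hX]; rw [if_neg hg0]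
      have hvval : v t = -(d₁ / ‖gradL (x t)‖ ^ p₁ * ‖gradL (x t)‖ ^ (2:ℕ))
          - d₂ / ‖gradL (x t)‖ ^ p₂ * ‖gradL (x t)‖ ^ (2:ℕ) := by
        simp only [hv]
        rw [hXval, inner_sub_right, inner_neg_right, real_inner_smul_right,
          real_inner_smul_right, real_inner_self_eq_norm_sq]
      have hr2 : ‖gradL (x t)‖ ^ (2:ℕ) = ‖gradL (x t)‖ ^ ((2:ℝ)) := by
        rw [← Real.rpow_natCast ‖gradL (x t)‖ 2]
        norm_num
      have hterm : ∀ d p : ℝ, d / ‖gradL (x t)‖ ^ p * ‖gradL (x t)‖ ^ (2:ℕ)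
          = d * ‖gradL (x t)‖ ^ (2 - p) := by
        intro d p
        rw [hr2, div_mul_eq_mul_div, mul_div_assoc, ← Real.rpow_sub hr]
      have hPL : 2 * k * u t ≤ ‖gradL (x t)‖ ^ (2:ℕ) := PL (x t)
      have hra : ∀ a : ℝ, 0 < a → (2 * k * u t) ^ (a / 2) ≤ ‖gradL (x t)‖ ^ a := by
        intro a ha
        have h1 : (2 * k * u t) ^ (a / 2) ≤ (‖gradL (x t)‖ ^ (2:ℕ)) ^ (a / 2) := by
          apply Real.rpow_le_rpow _ hPL (by positivity)
          have := hu_nonneg t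
          positivity
        refine le_trans h1 ?_
        rw [hr2, ← Real.rpow_mul hr.le]
        rw [show (2:ℝ) * (a / 2) = a by ring]
      have hsplit : ∀ a : ℝ, (2 * k * u t) ^ (a / 2)
          = (2 * k) ^ (a / 2) * u t ^ (a / 2) := by
        intro a
        rw [Real.mul_rpow (by linarith) (hu_nonneg t)]
      rw [hvval, hterm d₁ p₁, hterm d₂ p₂, ← ha₁p, ← ha₂p]
      have hb1 : c₁ * u t ^ (a₁ / 2) ≤ d₁ * ‖gradL (x t)‖ ^ a₁ := by
        rw [hc₁, mul_assoc, ← hsplit a₁]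
        exact mul_le_mul_of_nonneg_left (hra a₁ (by linarith)) hd₁.le
      have hb2 : c₂ * u t ^ (a₂ / 2) ≤ d₂ * ‖gradL (x t)‖ ^ a₂ := by
        rw [hc₂, mul_assoc, ← hsplit a₂]
        exact mul_le_mul_of_nonneg_left (hra a₂ (by linarith)) hd₂.le
      linarith
  have hvle0 : ∀ t ∈ Ici (0:ℝ), v t ≤ 0 := by
    intro t ht
    have h1 := hbound t ht
    have h2 : 0 ≤ c₁ * u t ^ (a₁ / 2) := by
      apply mul_nonneg hc₁pos.le (Real.rpow_nonneg (hu_nonneg t) _)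
    have h3 : 0 ≤ c₂ * u t ^ (a₂ / 2) := by
      apply mul_nonneg hc₂pos.le (Real.rpow_nonneg (hu_nonneg t) _)
    linarith
  have hanti : AntitoneOn u (Ici (0:ℝ)) := aux_antitone_s9 u v hud hvle0
  set T₁ : ℝ := 2 ^ (1 - a₁ / 2) / (d₁ * k * (2 - a₁)) with hT₁
  set T₂ : ℝ := 2 ^ (1 - a₂ / 2) / (d₂ * k * (a₂ - 2)) with hT₂
  have hT₁pos : 0 < T₁ := by
    apply div_pos (Real.rpow_pos_of_pos two_pos _)
    have : 0 < 2 - a₁ := by linarith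
    positivity
  have hT₂pos : 0 < T₂ := by
    apply div_pos (Real.rpow_pos_of_pos two_pos _)
    have : 0 < a₂ - 2 := by linarith
    positivity
  -- arithmetic identities for the times
  have hkpow : ∀ a : ℝ, (k⁻¹) ^ (1 - a / 2) = k ^ (a / 2) / k := by
    intro a
    rw [Real.inv_rpow hk.le, ← Real.rpow_neg hk.le]
    rw [show -(1 - a / 2) = a / 2 - 1 by ring, Real.rpow_sub hk, Real.rpow_one]
  have h2pow : ∀ a : ℝ, ((2:ℝ)) ^ (1 - a / 2) = 2 / 2 ^ (a / 2) := by
    intro a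
    rw [Real.rpow_sub two_pos, Real.rpow_one]
  have h2kpow : ∀ a : ℝ, ((2:ℝ) * k) ^ (a / 2) = 2 ^ (a / 2) * k ^ (a / 2) := by
    intro a
    rw [Real.mul_rpow (by norm_num) hk.le]
  -- Phase 1: reach level k⁻¹ by time T₂
  have hphase1 : ∃ s ∈ Icc (0:ℝ) T₂, u s ≤ k⁻¹ := by
    apply aux_reach_level u v c₂ (a₂ / 2) k⁻¹ 0 T₂ (by positivity) hc₂pos (by linarith)
      hT₂pos.le
    · intro s hs
      exact hud s hs.1
    · intro s hs _
      have h1 := hbound s hs.1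
      have h2 : 0 ≤ c₁ * u s ^ (a₁ / 2) := by
        apply mul_nonneg hc₁pos.le (Real.rpow_nonneg (hu_nonneg s) _)
      linarith
    · have hk2 : (0:ℝ) < k ^ (a₂ / 2) := Real.rpow_pos_of_pos hk _
      have h22 : (0:ℝ) < (2:ℝ) ^ (a₂ / 2) := Real.rpow_pos_of_pos two_pos _
      have heq : (k⁻¹) ^ (1 - a₂ / 2) / (c₂ * (a₂ / 2 - 1)) = T₂ := by
        rw [hkpow, hc₂, h2kpow, hT₂, h2pow]
        have h1 : k ≠ 0 := ne_of_gt hk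
        have h2 : k ^ (a₂ / 2) ≠ 0 := ne_of_gt hk2
        have h3 : (2:ℝ) ^ (a₂ / 2) ≠ 0 := ne_of_gt h22
        have h4 : d₂ ≠ 0 := ne_of_gt hd₂
        have h5 : a₂ / 2 - 1 ≠ 0 := by intro h; apply absurd ha₂2; linarith [h]; 
        have h6 : a₂ - 2 ≠ 0 := by intro h; apply absurd ha₂2; linarith [h]
        field_simp
      rw [heq, sub_zero]
  obtain ⟨s₂, hs₂mem, hs₂⟩ := hphase1
  have huT₂ : u T₂ ≤ k⁻¹ := le_trans (hanti hs₂mem.1 hT₂pos.le hs₂mem.2) hs₂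
  -- Phase 2: hit zero by time T₂ + T₁
  have hphase2 : ∃ s ∈ Icc T₂ (T₂ + T₁), u s ≤ 0 := by
    apply aux_hit_zero u v c₁ (a₁ / 2) k⁻¹ T₂ (T₂ + T₁) (by positivity) hc₁pos
      (by linarith) (by linarith) (by linarith)
    · intro s hs
      exact hud s (le_trans hT₂pos.le hs.1)
    · intro s hs _
      have h1 := hbound s (le_trans hT₂pos.le hs.1)
      have h2 : 0 ≤ c₂ * u s ^ (a₂ / 2) := by
        apply mul_nonneg hc₂pos.le (Real.rpow_nonneg (hu_nonneg s) _)
      linarith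
    · exact huT₂
    · have hk1 : (0:ℝ) < k ^ (a₁ / 2) := Real.rpow_pos_of_pos hk _
      have h21 : (0:ℝ) < (2:ℝ) ^ (a₁ / 2) := Real.rpow_pos_of_pos two_pos _
      have heq : (k⁻¹) ^ (1 - a₁ / 2) / (c₁ * (1 - a₁ / 2)) = T₁ := by
        rw [hkpow, hc₁, h2kpow, hT₁, h2pow]
        have h1 : k ≠ 0 := ne_of_gt hk
        have h2 : k ^ (a₁ / 2) ≠ 0 := ne_of_gt hk1
        have h3 : (2:ℝ) ^ (a₁ / 2) ≠ 0 := ne_of_gt h21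
        have h4 : d₁ ≠ 0 := ne_of_gt hd₁
        have h5 : 1 - a₁ / 2 ≠ 0 := by intro h; apply absurd ha₁2; linarith [h]
        have h6 : 2 - a₁ ≠ 0 := by intro h; apply absurd ha₁2; linarith [h]
        field_simp
      have heq2 : T₂ + T₁ - T₂ = T₁ := by ring
      rw [heq, heq2]
  obtain ⟨s₃, hs₃mem, hs₃⟩ := hphase2
  intro t ht
  have hs₃0 : (0:ℝ) ≤ s₃ := le_trans hT₂pos.le hs₃mem.1
  have hts₃ : s₃ ≤ t := by
    have h1 := hs₃mem.2
    linarith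
  have ht0 : (0:ℝ) ≤ t := le_trans hs₃0 hts₃
  have hu3 : u s₃ = 0 := le_antisymm hs₃ (hu_nonneg s₃)
  have hut : u t = 0 :=
    le_antisymm (le_trans (hanti hs₃0 ht0 hts₃) (le_of_eq hu3)) (hu_nonneg t)
  clear_value u v X c₁ c₂ T₁ T₂ Lf c p₁ p₂
  have h2 : Lf (x t) - Lf xstar = 0 := by
    have h2' := hut
    simp only [hu] at h2'
    exact h2'
  have h1 := lower (x t)
  have h4 : ‖x t - xstar‖ ^ 2 = 0 := by
    refine le_antisymm ?_ (sq_nonneg _)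
    by_contra h7
    push_neg at h7
    have h8 := mul_pos (half_pos hk) h7
    linarith
  have h5 : x t - xstar = 0 := by
    rwa [pow_eq_zero_iff (by norm_num : (2:ℕ) ≠ 0), norm_eq_zero] at h4
  exact sub_eq_zero.mp h5
end

section
/- Let f satisfy the strong-convexity bound ⟪v, ∇²f(x) v⟫ ≥ k‖v‖² (k > 0). Suppose x : ℝ → ℝⁿ is differentiable at t with x'(t) = −∇f(x(t))/‖∇f(x(t))‖^{1/2} and ∇f(x(t)) ≠ 0. Then the function V ∘ x, where V(y) = ½‖∇f(y)‖², is differentiable at t and its derivative satisfies (V ∘ x)'(t) ≤ −k·2^{3/4}·(V(x(t)))^{3/4}. -/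
open scoped RealInnerProductSpace

/-- Lyapunov decrease for the rescaled gradient flow under strong convexity: along
`ẋ = −∇f(x)/‖∇f(x)‖^{1/2}` (at a point where `∇f(x(t)) ≠ 0`), the function
`V(y) = ½‖∇f(y)‖²` satisfies `(V∘x)'(t) ≤ −k·2^{3/4}·V(x(t))^{3/4}`. -/
theorem lyapunov_decrease_rescaled_flow_strong_convex
    {n : ℕ} (f : EuclideanSpace ℝ (Fin n) → ℝ) (hf : ContDiff ℝ 2 f)
    (k : ℝ) (hk : 0 < k)
    (hconv : ∀ x v : EuclideanSpace ℝ (Fin n),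
      k * ‖v‖ ^ 2 ≤ ⟪v, fderiv ℝ (gradient f) x v⟫)
    (x : ℝ → EuclideanSpace ℝ (Fin n)) (t : ℝ)
    (hx : HasDerivAt x
      (-(‖gradient f (x t)‖ ^ ((1 : ℝ) / 2))⁻¹ • gradient f (x t)) t)
    (hne : gradient f (x t) ≠ 0) :
    ∃ d : ℝ, HasDerivAt (fun s => (1 / 2) * ‖gradient f (x s)‖ ^ 2) d t ∧
      d ≤ -(k * 2 ^ ((3 : ℝ) / 4) * ((1 / 2) * ‖gradient f (x t)‖ ^ 2) ^ ((3 : ℝ) / 4)) := by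
  set g := gradient f (x t) with hg
  set v : EuclideanSpace ℝ (Fin n) := -(‖g‖ ^ ((1 : ℝ) / 2))⁻¹ • g with hv
  -- gradient f is differentiable
  have hgrad : ContDiff ℝ 1 (gradient f) := by
    have h1 : ContDiff ℝ 1 (fderiv ℝ f) := hf.fderiv_right (by norm_num)
    have : gradient f = fun y => (InnerProductSpace.toDual ℝ _).symm (fderiv ℝ f y) := rfl
    rw [this]
    exact (InnerProductSpace.toDual ℝ _).symm.contDiff.comp h1
  have hdg : HasFDerivAt (gradient f) (fderiv ℝ (gradient f) (x t)) (x t) :=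
    (hgrad.differentiable one_ne_zero (x t)).hasFDerivAt
  have hcomp : HasDerivAt (fun s => gradient f (x s)) (fderiv ℝ (gradient f) (x t) v) t :=
    hdg.comp_hasDerivAt t hx
  set w : EuclideanSpace ℝ (Fin n) := fderiv ℝ (gradient f) (x t) v with hw
  have hinner : HasDerivAt (fun s => ⟪gradient f (x s), gradient f (x s)⟫) (⟪g, w⟫ + ⟪w, g⟫) t :=
    hcomp.inner ℝ hcomp
  have hV : HasDerivAt (fun s => (1 / 2) * ‖gradient f (x s)‖ ^ 2)
      ((1/2) * (⟪g, w⟫ + ⟪w, g⟫)) t := by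
    have h := hinner.const_mul (1/2 : ℝ)
    simp only [real_inner_self_eq_norm_sq] at h
    exact h
  refine ⟨_, hV, ?_⟩
  have hgn : 0 < ‖g‖ := norm_pos_iff.mpr hne
  have hd : (1/2) * (⟪g, w⟫ + ⟪w, g⟫) = ⟪g, w⟫ := by
    rw [real_inner_comm w g]; ring
  rw [hd]
  -- compute ⟪g, w⟫
  have hlin : w = -(‖g‖ ^ ((1 : ℝ) / 2))⁻¹ • fderiv ℝ (gradient f) (x t) g := by
    rw [hw, hv, map_smul]
  have hkey : ⟪g, w⟫ = -(‖g‖ ^ ((1 : ℝ) / 2))⁻¹ * ⟪g, fderiv ℝ (gradient f) (x t) g⟫ := by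
    rw [hlin, real_inner_smul_right]
  have hpos : (0:ℝ) < ‖g‖ ^ ((1:ℝ)/2) := Real.rpow_pos_of_pos hgn _
  have hle : ⟪g, w⟫ ≤ -(k * ‖g‖ ^ ((3:ℝ)/2)) := by
    rw [hkey]
    have h1 := hconv (x t) g
    have : -(‖g‖ ^ ((1 : ℝ) / 2))⁻¹ * ⟪g, fderiv ℝ (gradient f) (x t) g⟫
        ≤ -(‖g‖ ^ ((1 : ℝ) / 2))⁻¹ * (k * ‖g‖ ^ 2) := by
      apply mul_le_mul_of_nonpos_left h1
      simp only [neg_nonpos]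
      positivity
    refine this.trans_eq ?_
    rw [neg_mul, neg_inj, inv_mul_eq_div, ← Real.rpow_natCast ‖g‖ 2,
      mul_div_assoc, ← Real.rpow_sub hgn]
    norm_num
  refine hle.trans_eq ?_
  have h2 : ((1:ℝ)/2 * ‖g‖^2 : ℝ) ^ ((3:ℝ)/4) = ((2:ℝ)^((3:ℝ)/4))⁻¹ * ‖g‖ ^ ((3:ℝ)/2) := by
    rw [Real.mul_rpow (by norm_num) (by positivity), one_div, Real.inv_rpow (by norm_num),
      ← Real.rpow_natCast ‖g‖ 2, ← Real.rpow_mul (norm_nonneg g)]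
    norm_num
  rw [h2, neg_inj, mul_assoc, ← mul_assoc (2 ^ ((3:ℝ)/4)), mul_inv_cancel₀ (by positivity), one_mul]
end

section
/- Let f satisfy the Polyak–Łojasiewicz inequality with constant μ_f > 0 and have unique minimizer x* with f* = f(x*). Suppose x : ℝ → ℝⁿ is differentiable at t with x'(t) = −∇f(x(t))/‖∇f(x(t))‖^{1/2} and ∇f(x(t)) ≠ 0. Then the function V ∘ x, where V(y) = ½(f(y) − f*)², is differentiable at t and satisfies (V ∘ x)'(t) ≤ −(2μ_f)^{3/4}·(V(x(t)))^{7/8}. -/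
open scoped RealInnerProductSpace

/-- Lyapunov decrease for the rescaled gradient flow under the PL inequality: along
`ẋ = −∇f(x)/‖∇f(x)‖^{1/2}` (at a point where `∇f(x(t)) ≠ 0`), the function
`V(y) = ½(f(y) − f*)²` satisfies `(V∘x)'(t) ≤ −(2μ_f)^{3/4}·V(x(t))^{7/8}`. -/
theorem lyapunov_decrease_rescaled_flow_PL
    {n : ℕ} (f : EuclideanSpace ℝ (Fin n) → ℝ) (hf : ContDiff ℝ 1 f)
    (μf : ℝ) (hμf : 0 < μf)
    (xstar : EuclideanSpace ℝ (Fin n))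
    (hmin : ∀ y, f xstar ≤ f y)
    (huniq : ∀ y, f y = f xstar → y = xstar)
    (hPL : ∀ y : EuclideanSpace ℝ (Fin n),
      μf * (f y - f xstar) ≤ (1 / 2) * ‖gradient f y‖ ^ 2)
    (x : ℝ → EuclideanSpace ℝ (Fin n)) (t : ℝ)
    (hx : HasDerivAt x
      (-(‖gradient f (x t)‖ ^ ((1 : ℝ) / 2))⁻¹ • gradient f (x t)) t)
    (hne : gradient f (x t) ≠ 0) :
    ∃ d : ℝ, HasDerivAt (fun s => (1 / 2) * (f (x s) - f xstar) ^ 2) d t ∧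
      d ≤ -((2 * μf) ^ ((3 : ℝ) / 4) *
        ((1 / 2) * (f (x t) - f xstar) ^ 2) ^ ((7 : ℝ) / 8)) := by
  set g := gradient f (x t) with hg
  set v := -(‖g‖ ^ ((1 : ℝ) / 2))⁻¹ • g with hv
  have hgrad : HasGradientAt f g (x t) :=
    ((hf.differentiable one_ne_zero) (x t)).hasGradientAt
  have hfx : HasDerivAt (fun s => f (x s)) ⟪g, v⟫ t := by
    have := hgrad.hasFDerivAt.comp_hasDerivAt t hx
    exact this
  have hgpos : (0 : ℝ) < ‖g‖ := norm_pos_iff.mpr hne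
  have hiv : ⟪g, v⟫ = -((‖g‖ ^ ((1 : ℝ) / 2))⁻¹ * ‖g‖ ^ 2) := by
    rw [hv, real_inner_smul_right, real_inner_self_eq_norm_sq]
    ring
  set a := f (x t) - f xstar with ha
  have han : 0 ≤ a := sub_nonneg.mpr (hmin _)
  have hD : HasDerivAt (fun s => (1 / 2) * (f (x s) - f xstar) ^ 2)
      (a * ⟪g, v⟫) t := by
    have := ((hfx.sub_const (f xstar)).pow 2).const_mul (1/2 : ℝ)
    refine this.congr_deriv ?_
    simp [ha]
    ring
  refine ⟨_, hD, ?_⟩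
  rw [hiv]
  have key : (2 * μf) ^ ((3 : ℝ) / 4) * ((1 / 2) * a ^ 2) ^ ((7 : ℝ) / 8)
      ≤ a * ((‖g‖ ^ ((1 : ℝ) / 2))⁻¹ * ‖g‖ ^ 2) := by
    have hPL' : 2 * μf * a ≤ ‖g‖ ^ 2 := by
      have := hPL (x t); nlinarith
    have hg32 : (‖g‖ ^ ((1 : ℝ) / 2))⁻¹ * ‖g‖ ^ 2 = ‖g‖ ^ ((3 : ℝ) / 2) := by
      rw [← Real.rpow_natCast ‖g‖ 2, ← Real.rpow_neg_one (‖g‖ ^ ((1:ℝ)/2)),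
        ← Real.rpow_mul hgpos.le, ← Real.rpow_add hgpos]
      norm_num
    rw [hg32]
    have h1 : (2 * μf * a) ^ ((3 : ℝ) / 4) ≤ (‖g‖ ^ 2) ^ ((3 : ℝ) / 4) :=
      Real.rpow_le_rpow (by positivity) hPL' (by norm_num)
    have h2 : (‖g‖ ^ 2) ^ ((3 : ℝ) / 4) = ‖g‖ ^ ((3 : ℝ) / 2) := by
      rw [← Real.rpow_natCast ‖g‖ 2, ← Real.rpow_mul hgpos.le]; norm_num
    have h3 : a * (2 * μf * a) ^ ((3 : ℝ) / 4)
        = (2 * μf) ^ ((3 : ℝ) / 4) * a ^ ((7 : ℝ) / 4) := by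
      rw [Real.mul_rpow (by positivity) han]
      rw [show ((7:ℝ)/4) = 1 + (3:ℝ)/4 by norm_num, Real.rpow_add' han (by norm_num),
        Real.rpow_one]
      ring
    have h4 : ((1 / 2) * a ^ 2) ^ ((7 : ℝ) / 8) ≤ a ^ ((7 : ℝ) / 4) := by
      have : ((1 / 2 : ℝ) * a ^ 2) ^ ((7 : ℝ) / 8) ≤ (a ^ 2) ^ ((7 : ℝ) / 8) := by
        apply Real.rpow_le_rpow (by positivity) (by nlinarith) (by norm_num)
      calc ((1 / 2 : ℝ) * a ^ 2) ^ ((7 : ℝ) / 8) ≤ (a ^ 2) ^ ((7 : ℝ) / 8) := this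
        _ = a ^ ((7 : ℝ) / 4) := by
          rw [← Real.rpow_natCast a 2, ← Real.rpow_mul han]; norm_num
    calc (2 * μf) ^ ((3 : ℝ) / 4) * ((1 / 2) * a ^ 2) ^ ((7 : ℝ) / 8)
        ≤ (2 * μf) ^ ((3 : ℝ) / 4) * a ^ ((7 : ℝ) / 4) := by
          apply mul_le_mul_of_nonneg_left h4 (by positivity)
      _ = a * (2 * μf * a) ^ ((3 : ℝ) / 4) := h3.symm
      _ ≤ a * ‖g‖ ^ ((3 : ℝ) / 2) := by
          apply mul_le_mul_of_nonneg_left _ han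
          rw [← h2]; exact h1
  linarith
end

section
/- Fix c₁, c₂ > 0, p₁ > 2, 1 < p₂ < 2, α₁ = 2 − (p₁−2)/(p₁−1), α₂ = 2 − (p₂−2)/(p₂−1). Let f satisfy the strong-convexity bound ⟪v, ∇²f(x) v⟫ ≥ k‖v‖² (k > 0). Suppose x : ℝ → ℝⁿ is differentiable at t with x'(t) = −c₁∇f(x(t))/‖∇f(x(t))‖^{(p₁−2)/(p₁−1)} − c₂∇f(x(t))/‖∇f(x(t))‖^{(p₂−2)/(p₂−1)} and ∇f(x(t)) ≠ 0. Then the function V ∘ x, where V(y) = ½‖∇f(y)‖², is differentiable at t and satisfies (V ∘ x)'(t) ≤ −c₁ k 2^{α₁/2} (V(x(t)))^{α₁/2} − c₂ k 2^{α₂/2} (V(x(t)))^{α₂/2}. -/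
open scoped RealInnerProductSpace

/-- Lyapunov decrease for the two-term fixed-time flow under strong convexity: along
`ẋ = −c₁∇f/‖∇f‖^{(p₁−2)/(p₁−1)} − c₂∇f/‖∇f‖^{(p₂−2)/(p₂−1)}` (at a point where
`∇f(x(t)) ≠ 0`), `V(y) = ½‖∇f(y)‖²` satisfies
`(V∘x)'(t) ≤ −c₁k2^{α₁/2}V^{α₁/2} − c₂k2^{α₂/2}V^{α₂/2}`. -/
theorem lyapunov_decrease_fixed_time_flow_strong_convex
    {n : ℕ} (c₁ c₂ p₁ p₂ : ℝ) (hc₁ : 0 < c₁) (hc₂ : 0 < c₂)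
    (hp₁ : 2 < p₁) (hp₂ : 1 < p₂) (hp₂' : p₂ < 2)
    (α₁ α₂ : ℝ) (hα₁ : α₁ = 2 - (p₁ - 2) / (p₁ - 1)) (hα₂ : α₂ = 2 - (p₂ - 2) / (p₂ - 1))
    (f : EuclideanSpace ℝ (Fin n) → ℝ) (hf : ContDiff ℝ 2 f)
    (k : ℝ) (hk : 0 < k)
    (hconv : ∀ x v : EuclideanSpace ℝ (Fin n),
      k * ‖v‖ ^ 2 ≤ ⟪v, fderiv ℝ (gradient f) x v⟫)
    (x : ℝ → EuclideanSpace ℝ (Fin n)) (t : ℝ)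
    (hx : HasDerivAt x
      (-((c₁ / ‖gradient f (x t)‖ ^ ((p₁ - 2) / (p₁ - 1))) • gradient f (x t))
        - (c₂ / ‖gradient f (x t)‖ ^ ((p₂ - 2) / (p₂ - 1))) • gradient f (x t)) t)
    (hne : gradient f (x t) ≠ 0) :
    ∃ d : ℝ, HasDerivAt (fun s => (1 / 2) * ‖gradient f (x s)‖ ^ 2) d t ∧
      d ≤ -(c₁ * k * 2 ^ (α₁ / 2) * ((1 / 2) * ‖gradient f (x t)‖ ^ 2) ^ (α₁ / 2))
          - c₂ * k * 2 ^ (α₂ / 2) * ((1 / 2) * ‖gradient f (x t)‖ ^ 2) ^ (α₂ / 2) := by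
  set g := gradient f with hg
  have hgc : ContDiff ℝ 1 g := by
    have h1 : ContDiff ℝ 1 (fderiv ℝ f) := hf.fderiv_right (by norm_num)
    have : g = fun y => (InnerProductSpace.toDual ℝ _).symm (fderiv ℝ f y) := rfl
    rw [this]
    exact ((InnerProductSpace.toDual ℝ _).symm.contDiff).comp h1
  set u := g (x t) with hu
  set q₁ := (p₁ - 2) / (p₁ - 1) with hq₁
  set q₂ := (p₂ - 2) / (p₂ - 1) with hq₂
  set a := c₁ / ‖u‖ ^ q₁ with ha
  set b := c₂ / ‖u‖ ^ q₂ with hb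
  set x' := -(a • u) - b • u with hx'
  set H := fderiv ℝ g (x t) with hH
  have hHfd : HasFDerivAt g H (x t) :=
    ((hgc.differentiable one_ne_zero) (x t)).hasFDerivAt
  have hG : HasDerivAt (fun s => g (x s)) (H x') t := hHfd.comp_hasDerivAt t hx
  have hr : 0 < ‖u‖ := norm_pos_iff.mpr hne
  have hrq₁ : (0:ℝ) < ‖u‖ ^ q₁ := Real.rpow_pos_of_pos hr _
  have hrq₂ : (0:ℝ) < ‖u‖ ^ q₂ := Real.rpow_pos_of_pos hr _
  have hapos : 0 < a := div_pos hc₁ hrq₁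
  have hbpos : 0 < b := div_pos hc₂ hrq₂
  -- derivative of V ∘ x
  have hV : HasDerivAt (fun s => (1 / 2) * ‖g (x s)‖ ^ 2) ⟪u, H x'⟫ t := by
    have h2 : HasDerivAt (fun s => ⟪g (x s), g (x s)⟫) (⟪u, H x'⟫ + ⟪H x', u⟫) t :=
      hG.inner ℝ hG
    have h3 : HasDerivAt (fun s => (1/2) * ⟪g (x s), g (x s)⟫)
        ((1/2) * (⟪u, H x'⟫ + ⟪H x', u⟫)) t := h2.const_mul _
    have he : (fun s => (1 / 2) * ‖g (x s)‖ ^ 2) = fun s => (1/2) * ⟪g (x s), g (x s)⟫ := by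
      funext s; rw [real_inner_self_eq_norm_sq]
    rw [he]
    convert h3 using 1
    rw [real_inner_comm (H x') u]; ring
  refine ⟨⟪u, H x'⟫, hV, ?_⟩
  -- bound the derivative
  have hlin : H x' = -((a + b) • H u) := by
    rw [hx']
    simp [map_sub, map_neg, map_smul, add_smul]
    abel
  have hinner : ⟪u, H x'⟫ = -((a + b) * ⟪u, H u⟫) := by
    rw [hlin]
    simp [inner_smul_right, inner_neg_right]
  have hbound : ⟪u, H x'⟫ ≤ -((a + b) * (k * ‖u‖ ^ 2)) := by
    rw [hinner]
    have := hconv (x t) u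
    nlinarith [mul_pos hapos hbpos]
  refine hbound.trans ?_
  -- RHS computation: show equality of the two sides
  have hq₁lt : q₁ < 2 := by
    rw [hq₁]; rw [div_lt_iff₀ (by linarith)]; linarith
  have hkey : ∀ e : ℝ, (2:ℝ) ^ e * ((1 / 2) * ‖u‖ ^ 2) ^ e = ‖u‖ ^ (2 * e) := by
    intro e
    have h2V : (0:ℝ) ≤ (1/2) * ‖u‖ ^ 2 := by positivity
    rw [← Real.mul_rpow (by norm_num) h2V]
    have h1 : (2:ℝ) * ((1/2) * ‖u‖ ^ 2) = ‖u‖ ^ 2 := by ring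
    rw [h1, ← Real.rpow_natCast ‖u‖ 2, ← Real.rpow_mul hr.le]
    norm_num
  have hrhs₁ : c₁ * k * 2 ^ (α₁ / 2) * ((1 / 2) * ‖u‖ ^ 2) ^ (α₁ / 2) = a * (k * ‖u‖ ^ 2) := by
    rw [mul_assoc, hkey]
    have hα : (2:ℝ) * (α₁ / 2) = 2 - q₁ := by rw [hα₁]; ring
    rw [hα, Real.rpow_sub hr, ha]
    rw [show ((‖u‖:ℝ) ^ (2:ℝ)) = ‖u‖ ^ (2:ℕ) by rw [← Real.rpow_natCast ‖u‖ 2]; norm_num]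
    field_simp
  have hrhs₂ : c₂ * k * 2 ^ (α₂ / 2) * ((1 / 2) * ‖u‖ ^ 2) ^ (α₂ / 2) = b * (k * ‖u‖ ^ 2) := by
    rw [mul_assoc, hkey]
    have hα : (2:ℝ) * (α₂ / 2) = 2 - q₂ := by rw [hα₂]; ring
    rw [hα, Real.rpow_sub hr, hb]
    rw [show ((‖u‖:ℝ) ^ (2:ℝ)) = ‖u‖ ^ (2:ℕ) by rw [← Real.rpow_natCast ‖u‖ 2]; norm_num]
    field_simp
  rw [hrhs₁, hrhs₂]; ring_nf; linarith
end

section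
/- Fix c₁, c₂ > 0, p₁ > 2, 1 < p₂ < 2, α₁ = 2 − (p₁−2)/(p₁−1), α₂ = 2 − (p₂−2)/(p₂−1). Let f be twice continuously differentiable with ∇²f(x(t)) invertible. Suppose x : ℝ → ℝⁿ is differentiable at t with x'(t) = −(∇²f(x(t)))⁻¹ (c₁∇f(x(t))/‖∇f(x(t))‖^{(p₁−2)/(p₁−1)} + c₂∇f(x(t))/‖∇f(x(t))‖^{(p₂−2)/(p₂−1)}) and ∇f(x(t)) ≠ 0. Then the function V ∘ x, where V(y) = ½‖∇f(y)‖², is differentiable at t and satisfies (V ∘ x)'(t) = −c₁‖∇f(x(t))‖^{α₁} − c₂‖∇f(x(t))‖^{α₂}. -/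
open scoped RealInnerProductSpace

/-- Lyapunov derivative along the modified Newton flow: along
`ẋ = −(∇²f(x))⁻¹(c₁∇f/‖∇f‖^{(p₁−2)/(p₁−1)} + c₂∇f/‖∇f‖^{(p₂−2)/(p₂−1)})` (at a point
where `∇f(x(t)) ≠ 0` and the Hessian is invertible), `V(y) = ½‖∇f(y)‖²` satisfies
`(V∘x)'(t) = −c₁‖∇f(x(t))‖^{α₁} − c₂‖∇f(x(t))‖^{α₂}`. -/
theorem lyapunov_derivative_newton_flow
    {n : ℕ} (c₁ c₂ p₁ p₂ : ℝ) (hc₁ : 0 < c₁) (hc₂ : 0 < c₂)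
    (hp₁ : 2 < p₁) (hp₂ : 1 < p₂) (hp₂' : p₂ < 2)
    (α₁ α₂ : ℝ) (hα₁ : α₁ = 2 - (p₁ - 2) / (p₁ - 1)) (hα₂ : α₂ = 2 - (p₂ - 2) / (p₂ - 1))
    (f : EuclideanSpace ℝ (Fin n) → ℝ) (hf : ContDiff ℝ 2 f)
    (x : ℝ → EuclideanSpace ℝ (Fin n)) (t : ℝ)
    (hinv : IsUnit (fderiv ℝ (gradient f) (x t)))
    (hx : HasDerivAt x
      (-(Ring.inverse (fderiv ℝ (gradient f) (x t))
        ((c₁ / ‖gradient f (x t)‖ ^ ((p₁ - 2) / (p₁ - 1))) • gradient f (x t)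
          + (c₂ / ‖gradient f (x t)‖ ^ ((p₂ - 2) / (p₂ - 1))) • gradient f (x t)))) t)
    (hne : gradient f (x t) ≠ 0) :
    HasDerivAt (fun s => (1 / 2) * ‖gradient f (x s)‖ ^ 2)
      (-(c₁ * ‖gradient f (x t)‖ ^ α₁) - c₂ * ‖gradient f (x t)‖ ^ α₂) t := by
  set g := gradient f with hg
  set a := g (x t) with ha
  set e₁ := (p₁ - 2) / (p₁ - 1)
  set e₂ := (p₂ - 2) / (p₂ - 1)
  set v := (c₁ / ‖a‖ ^ e₁) • a + (c₂ / ‖a‖ ^ e₂) • a with hv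
  have hr : (0:ℝ) < ‖a‖ := norm_pos_iff.mpr hne
  have hgd : ContDiff ℝ 1 g := by
    have h1 : ContDiff ℝ 1 (fderiv ℝ f) := hf.fderiv_right (by norm_num)
    exact ((InnerProductSpace.toDual ℝ (EuclideanSpace ℝ (Fin n))).symm.contDiff).comp h1
  have hG : HasFDerivAt g (fderiv ℝ g (x t)) (x t) :=
    (hgd.differentiable one_ne_zero (x t)).hasFDerivAt
  have hGx : HasDerivAt (fun s => g (x s))
      (fderiv ℝ g (x t) (-(Ring.inverse (fderiv ℝ g (x t)) v))) t :=
    hG.comp_hasDerivAt t hx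
  have key : fderiv ℝ g (x t) (Ring.inverse (fderiv ℝ g (x t)) v) = v := by
    rw [← ContinuousLinearMap.mul_apply, Ring.mul_inverse_cancel _ hinv,
      ContinuousLinearMap.one_apply]
  rw [map_neg, key] at hGx
  have hI : HasDerivAt (fun s => (1/2) * ⟪g (x s), g (x s)⟫)
      ((1/2) * (⟪a, -v⟫ + ⟪-v, a⟫)) t := (hGx.inner ℝ hGx).const_mul (1/2)
  have heq : (fun s => (1/2) * ⟪g (x s), g (x s)⟫)
      = fun s => (1/2) * ‖g (x s)‖ ^ 2 := by
    funext s; rw [real_inner_self_eq_norm_sq]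
  rw [heq] at hI
  convert hI using 1
  rw [hv]
  simp only [inner_neg_left, inner_neg_right, inner_add_left, inner_add_right,
    real_inner_smul_left, real_inner_smul_right, real_inner_self_eq_norm_sq]
  have hn : ‖a‖ ^ 2 = ‖a‖ ^ (2:ℝ) := by
    rw [← Real.rpow_natCast ‖a‖ 2]; norm_num
  have h1 : c₁ / ‖a‖ ^ e₁ * ‖a‖ ^ 2 = c₁ * ‖a‖ ^ α₁ := by
    rw [hn, hα₁, div_mul_eq_mul_div, mul_div_assoc, ← Real.rpow_sub hr]
  have h2 : c₂ / ‖a‖ ^ e₂ * ‖a‖ ^ 2 = c₂ * ‖a‖ ^ α₂ := by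
    rw [hn, hα₂, div_mul_eq_mul_div, mul_div_assoc, ← Real.rpow_sub hr]
  rw [h1, h2]; ring
end
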